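/- arXiv:1109.2669 — 11 statements merged into one kernel-verified Lean document; each statement's English description precedes it below -/
import Mathlib

section
/- Let ξ be a complex-valued random variable with finite moments up to order 4 satisfying E(ξ) = E(|ξ|²). Then E(|ξ|²)·E(|1−ξ|²)·E(|ξ|²|1−ξ|²) ≥ |E(ξ|1−ξ|²)|². -/
open Finset

/-- Lemma 4.3 (Pearson-type inequality): for a finitely-supported complex random
variable ξ (weights `w` nonneg summing to 1) with E(ξ) = E(|ξ|²), one has
E(|ξ|²)·E(|1−ξ|²)·E(|ξ|²|1−ξ|²) ≥ |E(ξ|1−ξ|²)|². -/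
theorem stmt0 (m : ℕ) (w : Fin m → ℝ) (ξ : Fin m → ℂ)
    (hw : ∀ i, 0 ≤ w i) (hsum : ∑ i, w i = 1)
    (hmom : ∑ i, (w i : ℂ) * ξ i = ∑ i, (w i : ℂ) * ((‖ξ i‖ : ℝ) : ℂ) ^ 2) :
    ‖∑ i, (w i : ℂ) * ξ i * ((‖1 - ξ i‖ : ℝ) : ℂ) ^ 2‖ ^ 2 ≤
      (∑ i, w i * ‖ξ i‖ ^ 2) * (∑ i, w i * ‖1 - ξ i‖ ^ 2) *
        (∑ i, w i * ‖ξ i‖ ^ 2 * ‖1 - ξ i‖ ^ 2) := by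
  set a : ℝ := ∑ i, w i * ‖ξ i‖ ^ 2 with ha
  set X : Fin m → ℂ := fun i => ξ i * (1 - (starRingEnd ℂ) (ξ i)) with hX
  set Y : Fin m → ℂ := fun i => (a : ℂ) - ξ i with hY
  -- ξ * conj ξ rewriting
  have habs : ∀ z : ℂ, ((‖z‖ : ℝ) : ℂ) ^ 2 = z * (starRingEnd ℂ) z := by
    intro z
    rw [Complex.mul_conj, ← Complex.sq_norm z]
    push_cast
    ring
  -- ∑ w X = 0
  have hX0 : ∑ i, (w i : ℂ) * X i = 0 := by
    have : ∑ i, (w i : ℂ) * X i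
        = ∑ i, (w i : ℂ) * ξ i - ∑ i, (w i : ℂ) * ((‖ξ i‖ : ℝ) : ℂ) ^ 2 := by
      rw [← Finset.sum_sub_distrib]
      refine Finset.sum_congr rfl fun i _ => ?_
      rw [habs]
      simp [hX]
      ring
    rw [this, hmom, sub_self]
  -- the moment sum is real: real and imaginary parts of hmom
  have hre : ∑ i, w i * (ξ i).re = a := by
    have := congrArg Complex.re hmom
    simpa [Complex.re_sum, ha, ← Complex.ofReal_pow, Finset.mul_sum] using this
  have him : ∑ i, w i * (ξ i).im = 0 := by
    have := congrArg Complex.im hmom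
    simpa [Complex.im_sum, ← Complex.ofReal_pow] using this
  -- key identity: S = ∑ w X Y
  have hS : ∑ i, (w i : ℂ) * ξ i * ((‖1 - ξ i‖ : ℝ) : ℂ) ^ 2
      = ∑ i, (w i : ℂ) * (X i * Y i) := by
    have h1 : ∑ i, (w i : ℂ) * (X i * Y i)
        = ∑ i, ((w i : ℂ) * ξ i * ((‖1 - ξ i‖ : ℝ) : ℂ) ^ 2
            + ((a : ℂ) - 1) * ((w i : ℂ) * X i)) := by
      refine Finset.sum_congr rfl fun i _ => ?_
      rw [habs]
      simp only [hX, hY, map_sub, map_one]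
      ring
    rw [h1, Finset.sum_add_distrib, ← Finset.mul_sum, hX0, mul_zero, add_zero]
  -- abs bounds
  have hXabs : ∀ i, ‖X i‖ = ‖ξ i‖ * ‖1 - ξ i‖ := by
    intro i
    have h1 : X i = ξ i * (starRingEnd ℂ) (1 - ξ i) := by
      simp only [hX, map_sub, map_one]
    rw [h1, norm_mul, Complex.norm_conj]
  -- step 1: |S| ≤ ∑ w |X| |Y|
  have step1 : ‖∑ i, (w i : ℂ) * ξ i * ((‖1 - ξ i‖ : ℝ) : ℂ) ^ 2‖
      ≤ ∑ i, w i * (‖X i‖ * ‖Y i‖) := by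
    rw [hS]
    refine le_trans (norm_sum_le _ _) ?_
    refine le_of_eq (Finset.sum_congr rfl fun i _ => ?_)
    rw [norm_mul, norm_mul, Complex.norm_of_nonneg (hw i)]
  -- step 2: Cauchy-Schwarz
  have step2 : (∑ i, w i * (‖X i‖ * ‖Y i‖)) ^ 2
      ≤ (∑ i, w i * ‖X i‖ ^ 2) * (∑ i, w i * ‖Y i‖ ^ 2) := by
    have h := Finset.sum_mul_sq_le_sq_mul_sq Finset.univ
      (fun i => Real.sqrt (w i) * ‖X i‖)
      (fun i => Real.sqrt (w i) * ‖Y i‖)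
    have e1 : ∀ i : Fin m, (Real.sqrt (w i) * ‖X i‖)
        * (Real.sqrt (w i) * ‖Y i‖)
        = w i * (‖X i‖ * ‖Y i‖) := by
      intro i
      have : Real.sqrt (w i) * Real.sqrt (w i) = w i := Real.mul_self_sqrt (hw i)
      calc (Real.sqrt (w i) * ‖X i‖) * (Real.sqrt (w i) * ‖Y i‖)
          = (Real.sqrt (w i) * Real.sqrt (w i)) * (‖X i‖ * ‖Y i‖) := by
            ring
        _ = _ := by rw [this]
    have e2 : ∀ (f : Fin m → ℂ) (i : Fin m),
        (Real.sqrt (w i) * ‖f i‖) ^ 2 = w i * ‖f i‖ ^ 2 := by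
      intro f i
      rw [mul_pow, Real.sq_sqrt (hw i)]
    simp only [e1, e2] at h
    exact h
  -- moment computations: |z|^2 = re^2 + im^2 identities
  have habs2 : ∀ z : ℂ, ‖z‖ ^ 2 = z.re ^ 2 + z.im ^ 2 := by
    intro z
    rw [Complex.sq_norm, Complex.normSq_apply]
    ring
  have hone : ∑ i, w i * ‖1 - ξ i‖ ^ 2 = 1 - a := by
    have : ∀ i, w i * ‖1 - ξ i‖ ^ 2
        = w i - 2 * (w i * (ξ i).re) + w i * ‖ξ i‖ ^ 2 := by
      intro i
      rw [habs2, habs2]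
      simp [Complex.sub_re, Complex.sub_im]
      ring
    simp only [this, Finset.sum_add_distrib, Finset.sum_sub_distrib, ← Finset.mul_sum, hsum,
      ← ha]
    rw [hre]
    ring
  have hYsum : ∑ i, w i * ‖Y i‖ ^ 2 = a * (1 - a) := by
    have : ∀ i, w i * ‖Y i‖ ^ 2
        = a ^ 2 * w i - 2 * a * (w i * (ξ i).re) + w i * ‖ξ i‖ ^ 2 := by
      intro i
      rw [habs2, habs2]
      simp [hY, Complex.sub_re, Complex.sub_im]
      ring
    simp only [this, Finset.sum_add_distrib, Finset.sum_sub_distrib, ← Finset.mul_sum, hsum,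
      ← ha]
    rw [hre]
    ring
  have hXsum : ∑ i, w i * ‖X i‖ ^ 2
      = ∑ i, w i * ‖ξ i‖ ^ 2 * ‖1 - ξ i‖ ^ 2 := by
    refine Finset.sum_congr rfl fun i _ => ?_
    rw [hXabs, mul_pow]
    ring
  -- combine
  have hnn : 0 ≤ ∑ i, w i * (‖X i‖ * ‖Y i‖) :=
    Finset.sum_nonneg fun i _ => mul_nonneg (hw i)
      (mul_nonneg (norm_nonneg _) (norm_nonneg _))
  calc ‖∑ i, (w i : ℂ) * ξ i * ((‖1 - ξ i‖ : ℝ) : ℂ) ^ 2‖ ^ 2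
      ≤ (∑ i, w i * (‖X i‖ * ‖Y i‖)) ^ 2 := by
        exact pow_le_pow_left₀ (norm_nonneg _) step1 2
    _ ≤ (∑ i, w i * ‖X i‖ ^ 2) * (∑ i, w i * ‖Y i‖ ^ 2) := step2
    _ = _ := by rw [hXsum, hYsum, ← hone]; ring
end

section
/- For the Orthomin(1) iteration r_{n+1} = r_n − λ_n A r_n applied to a diagonal matrix A = diag[μ₁,…,μ_d] with nonzero entries and λ_n = ⟨r_n, A r_n⟩/⟨A r_n, A r_n⟩, the residual ratio satisfies ‖r_{n+1}‖²/‖r_n‖² = 1 − |E_n(μ)|²/E_n(|μ|²), where E_n denotes expectation with respect to the probability measure with weights proportional to |r_n^k|². -/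
open Finset

/-- One step of Orthomin(1) for A = diag[μ₁,…,μ_d]:
‖r_{n+1}‖²/‖r_n‖² = 1 − |E_n(μ)|²/E_n(|μ|²), where E_n is expectation with
respect to weights proportional to |r_n^k|². -/
theorem stmt2 (d : ℕ) (μ : Fin d → ℂ) (hμ : ∀ k, μ k ≠ 0)
    (r : Fin d → ℂ) (hr : r ≠ 0)
    (lam : ℂ)
    (hlam : lam = (∑ k, r k * (starRingEnd ℂ) (μ k * r k)) /
      (∑ k, (μ k * r k) * (starRingEnd ℂ) (μ k * r k)))
    (r' : Fin d → ℂ) (hr' : r' = fun k => r k - lam * (μ k * r k)) :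
    (∑ k, ‖r' k‖ ^ 2) / (∑ k, ‖r k‖ ^ 2) =
      1 - ‖(∑ k, μ k * ((‖r k‖ : ℝ) : ℂ) ^ 2) /
            ((∑ k, ‖r k‖ ^ 2 : ℝ) : ℂ)‖ ^ 2 /
        ((∑ k, ‖μ k‖ ^ 2 * ‖r k‖ ^ 2) /
          (∑ k, ‖r k‖ ^ 2)) := by
  classical
  obtain ⟨k0, hk0⟩ : ∃ k, r k ≠ 0 := by
    by_contra h; push_neg at h; exact hr (funext h)
  set S : ℝ := ∑ k, ‖r k‖ ^ 2 with hS
  set T : ℝ := ∑ k, ‖μ k‖ ^ 2 * ‖r k‖ ^ 2 with hT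
  set B : ℂ := ∑ k, μ k * ((‖r k‖ : ℝ) : ℂ) ^ 2 with hB
  have hSpos : 0 < S := by
    refine Finset.sum_pos' (fun k _ => by positivity) ⟨k0, Finset.mem_univ k0, ?_⟩
    exact pow_pos (norm_pos_iff.mpr hk0) 2
  have hTpos : 0 < T := by
    refine Finset.sum_pos' (fun k _ => by positivity) ⟨k0, Finset.mem_univ k0, ?_⟩
    exact mul_pos (pow_pos (norm_pos_iff.mpr (hμ k0)) 2) (pow_pos (norm_pos_iff.mpr hk0) 2)
  have hTC : ((T : ℝ) : ℂ) ≠ 0 := by exact_mod_cast hTpos.ne'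
  have habs : ∀ z : ℂ, ((‖z‖ : ℝ) : ℂ) ^ 2 = z * (starRingEnd ℂ) z := by
    intro z
    rw [← Complex.ofReal_pow, Complex.sq_norm]
    exact (Complex.mul_conj z).symm
  have hSC : ((S : ℝ) : ℂ) = ∑ k, r k * (starRingEnd ℂ) (r k) := by
    rw [hS]; push_cast; exact Finset.sum_congr rfl fun k _ => habs _
  have hTCeq : ((T : ℝ) : ℂ) = ∑ k, (μ k * r k) * (starRingEnd ℂ) (μ k * r k) := by
    rw [hT]; push_cast
    refine Finset.sum_congr rfl fun k _ => ?_
    rw [show ((‖μ k‖ : ℝ) : ℂ) ^ 2 * ((‖r k‖ : ℝ) : ℂ) ^ 2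
        = ((‖μ k * r k‖ : ℝ) : ℂ) ^ 2 by rw [norm_mul]; push_cast; ring, habs]
  have hBC : B = ∑ k, μ k * (r k * (starRingEnd ℂ) (r k)) := by
    rw [hB]; exact Finset.sum_congr rfl fun k _ => by rw [habs]
  have hBconj : (starRingEnd ℂ) B = ∑ k, (starRingEnd ℂ) (μ k) * (r k * (starRingEnd ℂ) (r k)) := by
    rw [hBC, map_sum]
    refine Finset.sum_congr rfl fun k _ => ?_
    simp only [map_mul, Complex.conj_conj]; ring
  have hlam' : lam = (starRingEnd ℂ) B / (T : ℂ) := by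
    rw [hlam, hBconj, hTCeq]
    congr 1
    refine Finset.sum_congr rfl fun k _ => ?_
    simp only [map_mul]; ring
  have key : ((∑ k, ‖r' k‖ ^ 2 : ℝ) : ℂ)
      = (S : ℂ) - B * (starRingEnd ℂ) B / (T : ℂ) := by
    push_cast
    calc (∑ k, ((‖r' k‖ : ℝ) : ℂ) ^ 2)
        = ∑ k, (r' k * (starRingEnd ℂ) (r' k)) :=
          Finset.sum_congr rfl fun k _ => habs _
      _ = (∑ k, r k * (starRingEnd ℂ) (r k))
            - (starRingEnd ℂ) lam * ∑ k, (starRingEnd ℂ) (μ k) * (r k * (starRingEnd ℂ) (r k))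
            - lam * ∑ k, μ k * (r k * (starRingEnd ℂ) (r k))
            + lam * (starRingEnd ℂ) lam * ∑ k, (μ k * r k) * (starRingEnd ℂ) (μ k * r k) := by
          simp only [hr', map_sub, map_mul, Finset.mul_sum]
          rw [← Finset.sum_sub_distrib, ← Finset.sum_sub_distrib, ← Finset.sum_add_distrib]
          exact Finset.sum_congr rfl fun k _ => by ring
      _ = (S : ℂ) - (starRingEnd ℂ) lam * (starRingEnd ℂ) B - lam * B
            + lam * (starRingEnd ℂ) lam * (T : ℂ) := by
          rw [hSC, hTCeq, hBconj, hBC]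
      _ = (S : ℂ) - B * (starRingEnd ℂ) B / (T : ℂ) := by
          rw [hlam']
          simp only [map_div₀, Complex.conj_conj, Complex.conj_ofReal]
          field_simp
          ring
  have keyR : (∑ k, ‖r' k‖ ^ 2) = S - (‖B‖) ^ 2 / T := by
    have h2 : ((∑ k, ‖r' k‖ ^ 2 : ℝ) : ℂ)
        = ((S - (‖B‖) ^ 2 / T : ℝ) : ℂ) := by
      rw [key, Complex.mul_conj, ← Complex.sq_norm]
      push_cast
      ring
    exact_mod_cast h2
  rw [keyR]
  have habsB : ‖B / (S : ℂ)‖ = ‖B‖ / S := by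
    rw [norm_div, Complex.norm_real, Real.norm_eq_abs, abs_of_pos hSpos]
  rw [habsB]
  field_simp
end

section
/- Let A ∈ M_d(ℂ) be a normal matrix whose spectrum is contained in the closed disk of radius ρ about z₀, with 0 < ρ < |z₀|. Then the Orthomin(k) residuals satisfy ‖r_{n+1}‖ ≤ (ρ/|z₀|)·‖r_n‖. -/
open Finset

/-- Theorem 2.1: if A is normal with spectrum in the closed disk of radius ρ
about z₀ (0 < ρ < |z₀|), and r_{n+1} = r_n − Π_V r_n where V is a subspace
containing A r_n (as happens in the Orthomin(k) iteration), then
‖r_{n+1}‖ ≤ (ρ/|z₀|)‖r_n‖. -/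
theorem stmt4 (d : ℕ) (A : Matrix (Fin d) (Fin d) ℂ) (hA : IsStarNormal A)
    (z₀ : ℂ) (ρ : ℝ) (hρ : 0 < ρ) (hz : ρ < ‖z₀‖)
    (hspec : ∀ z ∈ spectrum ℂ A, ‖z - z₀‖ ≤ ρ)
    (V : Submodule ℂ (EuclideanSpace ℂ (Fin d))) [CompleteSpace V]
    (rn : EuclideanSpace ℂ (Fin d))
    (hmem : (WithLp.equiv 2 (Fin d → ℂ)).symm
        (A.mulVec ((WithLp.equiv 2 (Fin d → ℂ)) rn)) ∈ V)
    (rn1 : EuclideanSpace ℂ (Fin d))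
    (hrn1 : rn1 = rn - (V.orthogonalProjectionOnto rn : EuclideanSpace ℂ (Fin d))) :
    ‖rn1‖ ≤ (ρ / ‖z₀‖) * ‖rn‖ := by
  have hz0 : z₀ ≠ 0 := by
    intro h
    rw [h, norm_zero] at hz
    exact absurd (hρ.trans hz) (lt_irrefl 0)
  set T : EuclideanSpace ℂ (Fin d) →L[ℂ] EuclideanSpace ℂ (Fin d) :=
    Matrix.toEuclideanCLM (𝕜 := ℂ) A with hT
  have hTrn : T rn = (WithLp.equiv 2 (Fin d → ℂ)).symm
      (A.mulVec ((WithLp.equiv 2 (Fin d → ℂ)) rn)) := by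
    conv_lhs => rw [show rn = (WithLp.equiv 2 (Fin d → ℂ)).symm
      ((WithLp.equiv 2 (Fin d → ℂ)) rn) from rfl]
    rfl
  -- B := T - z₀ • 1
  set B : EuclideanSpace ℂ (Fin d) →L[ℂ] EuclideanSpace ℂ (Fin d) :=
    T - algebraMap ℂ _ z₀ with hB
  have hTnormal : IsStarNormal T := by
    constructor
    have h2 := hA.star_comm_self.map (Matrix.toEuclideanCLM (𝕜 := ℂ) (n := Fin d))
    simpa [map_star] using h2
  have hBnormal : IsStarNormal B := by
    constructor
    have hc := hTnormal.star_comm_self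
    have hstar : star B = star T - algebraMap ℂ _ (star z₀) := by
      simp only [hB, algebraMap_star_comm]
      exact star_sub T _
    rw [hstar, hB]
    exact (hc.sub_right (Algebra.commute_algebraMap_right z₀ (star T))).sub_left
      (Algebra.commute_algebraMap_left (star z₀) _)
  have hspecT : spectrum ℂ T = spectrum ℂ A := by
    rw [hT]
    exact AlgEquiv.spectrum_eq (Matrix.toEuclideanCLM (𝕜 := ℂ) (n := Fin d)) A
  have hspecB : ∀ z ∈ spectrum ℂ B, ‖z‖₊ ≤ ρ.toNNReal := by
    intro z hzB
    rw [hB, ← spectrum.sub_singleton_eq, Set.sub_singleton] at hzB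
    obtain ⟨w, hw, rfl⟩ := hzB
    rw [hspecT] at hw
    have := hspec w hw
    simpa [← NNReal.coe_le_coe, Complex.norm_def, hρ.le] using this
  have hrad : spectralRadius ℂ B ≤ (ρ.toNNReal : ENNReal) := by
    apply iSup₂_le
    intro z hzB
    exact_mod_cast hspecB z hzB
  have hnormB : ‖B‖ ≤ ρ := by
    have := hBnormal.spectralRadius_eq_nnnorm
    rw [this] at hrad
    have : ‖B‖₊ ≤ ρ.toNNReal := by exact_mod_cast hrad
    calc ‖B‖ = (‖B‖₊ : ℝ) := rfl
    _ ≤ (ρ.toNNReal : ℝ) := by exact_mod_cast this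
    _ = ρ := Real.coe_toNNReal ρ hρ.le
  -- candidate vector
  set w : EuclideanSpace ℂ (Fin d) := z₀⁻¹ • (T rn) with hw
  have hwV : w ∈ V := by
    rw [hw, hTrn]
    exact V.smul_mem _ hmem
  have key : ‖rn1‖ ≤ ‖rn - w‖ := by
    rw [hrn1, ← Submodule.starProjection_apply, Submodule.starProjection_minimal]
    exact ciInf_le ⟨0, fun x ⟨v, hv⟩ => hv ▸ norm_nonneg _⟩ (⟨w, hwV⟩ : V)
  have hrnw : rn - w = (-z₀⁻¹) • (B rn) := by
    rw [hw, hB]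
    simp only [ContinuousLinearMap.sub_apply, smul_sub, neg_smul]
    rw [ContinuousLinearMap.algebraMap_apply]
    rw [smul_smul, inv_mul_cancel₀ hz0, one_smul]
    abel
  have : ‖rn - w‖ ≤ (ρ / ‖z₀‖) * ‖rn‖ := by
    rw [hrnw, norm_smul]
    have hBrn : ‖B rn‖ ≤ ρ * ‖rn‖ := by
      calc ‖B rn‖ ≤ ‖B‖ * ‖rn‖ := B.le_opNorm rn
      _ ≤ ρ * ‖rn‖ := by gcongr
    have h1 : ‖(-z₀⁻¹ : ℂ)‖ = (‖z₀‖)⁻¹ := by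
      simp
    rw [h1, div_eq_inv_mul, mul_assoc]
    gcongr
  exact key.trans this
end

section
/- Let A = I + ρU with U = diag[ζ₁,…,ζ_d], |ζ_k| = 1, 0 < ρ < 1, and consider the Orthomin(1) quantities ω_n = ⟨U r_n, r_n⟩/⟨r_n, r_n⟩ and λ_n = ⟨r_n, A r_n⟩/‖A r_n‖². Then λ_n = (1 + ρ·conj(ω_n))/(1 + ρ² + 2ρ·Re(ω_n)), T_n := (1 − λ_n)/(ρλ_n) = (ω_n + ρ)/(ρ·conj(ω_n) + 1), and q_n² = ρ²(1 − |ω_n|²)/(1 + ρ² + 2ρ·Re(ω_n)). -/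
open Finset

/-- Lemma 4.1: with A = I + ρU, U = diag[ζ₁,…,ζ_d], |ζ_k| = 1, 0 < ρ < 1,
ω = ⟨Ur,r⟩/⟨r,r⟩, λ = ⟨r,Ar⟩/‖Ar‖², T = (1−λ)/(ρλ):
λ = (1+ρω̄)/(1+ρ²+2ρ Re ω), T = (ω+ρ)/(ρω̄+1),
q² = ρ²(1−|ω|²)/(1+ρ²+2ρ Re ω). -/
theorem stmt6 (d : ℕ) (ρ : ℝ) (h1 : 0 < ρ) (h2 : ρ < 1)
    (ζ : Fin d → ℂ) (hζ : ∀ k, ‖ζ k‖ = 1)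
    (r : Fin d → ℂ) (hr : r ≠ 0)
    (ω lam T : ℂ)
    (hω : ω = (∑ k, ζ k * r k * (starRingEnd ℂ) (r k)) /
      ((∑ k, ‖r k‖ ^ 2 : ℝ) : ℂ))
    (hlam : lam = (∑ k, r k * (starRingEnd ℂ) ((1 + ρ * ζ k) * r k)) /
      ((∑ k, ‖(1 + ρ * ζ k) * r k‖ ^ 2 : ℝ) : ℂ))
    (hT : T = (1 - lam) / (ρ * lam))
    (r' : Fin d → ℂ) (hr' : r' = fun k => r k - lam * ((1 + ρ * ζ k) * r k)) :
    lam = (1 + ρ * (starRingEnd ℂ) ω) / ((1 + ρ ^ 2 + 2 * ρ * ω.re : ℝ) : ℂ) ∧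
    T = (ω + ρ) / (ρ * (starRingEnd ℂ) ω + 1) ∧
    (∑ k, ‖r' k‖ ^ 2) / (∑ k, ‖r k‖ ^ 2) =
      ρ ^ 2 * (1 - ‖ω‖ ^ 2) / (1 + ρ ^ 2 + 2 * ρ * ω.re) := by
  subst hr'
  set S : ℝ := ∑ k, ‖r k‖ ^ 2 with hSdef
  have hS0 : 0 < S := by
    rcases Function.ne_iff.mp hr with ⟨k, hk⟩
    refine Finset.sum_pos' (fun i _ => by positivity) ⟨k, Finset.mem_univ k, ?_⟩
    have := norm_pos_iff.mpr hk
    positivity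
  have hSne : (S : ℂ) ≠ 0 := by exact_mod_cast ne_of_gt hS0
  have habs2 : ∀ z : ℂ, ((‖z‖ ^ 2 : ℝ) : ℂ) = z * (starRingEnd ℂ) z := by
    intro z; rw [Complex.sq_norm, Complex.mul_conj]
  have hSC : (S : ℂ) = ∑ k, r k * (starRingEnd ℂ) (r k) := by
    rw [hSdef, Complex.ofReal_sum]
    exact Finset.sum_congr rfl fun k _ => habs2 (r k)
  set W : ℂ := ∑ k, ζ k * r k * (starRingEnd ℂ) (r k) with hWdef
  have hωW : ω = W / (S : ℂ) := hω
  have hWω : W = ω * (S : ℂ) := by rw [hωW]; field_simp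
  have hcW : (starRingEnd ℂ) W = (starRingEnd ℂ) ω * (S : ℂ) := by
    rw [hWω, map_mul, Complex.conj_ofReal]
  have hζζ : ∀ k, ζ k * (starRingEnd ℂ) (ζ k) = 1 := by
    intro k
    rw [Complex.mul_conj, ← Complex.sq_norm, hζ]
    norm_num
  have habsω : ‖ω‖ ≤ 1 := by
    rw [hωW, norm_div, Complex.norm_of_nonneg hS0.le]
    rw [div_le_one hS0]
    calc ‖W‖ ≤ ∑ k, ‖ζ k * r k * (starRingEnd ℂ) (r k)‖ :=
          norm_sum_le _ _
      _ = S := by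
          rw [hSdef]
          refine Finset.sum_congr rfl fun k _ => ?_
          rw [norm_mul, norm_mul, hζ, Complex.norm_conj, one_mul, sq]
  have hDr : 0 < 1 + ρ^2 + 2*ρ*ω.re := by
    have h3 : |ω.re| ≤ ‖ω‖ := Complex.abs_re_le_norm ω
    have h4 : -1 ≤ ω.re := by
      have := neg_abs_le ω.re
      linarith [habsω]
    nlinarith [sq_nonneg (1 - ρ)]
  have hDcne : ((1 + ρ ^ 2 + 2 * ρ * ω.re : ℝ) : ℂ) ≠ 0 := by
    exact_mod_cast ne_of_gt hDr
  have hDc : ((1 + ρ ^ 2 + 2 * ρ * ω.re : ℝ) : ℂ)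
      = 1 + (ρ:ℂ)^2 + ρ * (ω + (starRingEnd ℂ) ω) := by
    rw [Complex.add_conj]
    push_cast
    ring
  -- numerator identity
  have hN : (∑ k, r k * (starRingEnd ℂ) ((1 + ρ * ζ k) * r k))
      = (S:ℂ) + ρ * (starRingEnd ℂ) W := by
    rw [hSC, hWdef, map_sum, Finset.mul_sum, ← Finset.sum_add_distrib]
    refine Finset.sum_congr rfl fun k _ => ?_
    simp only [map_mul, map_add, map_one, Complex.conj_conj, Complex.conj_ofReal]
    ring
  -- denominator identity
  have hM : ((∑ k, ‖(1 + ρ * ζ k) * r k‖ ^ 2 : ℝ) : ℂ)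
      = (1 + (ρ:ℂ)^2) * S + ρ * (W + (starRingEnd ℂ) W) := by
    have hpt : ∀ k : Fin d, ((‖(1 + ρ * ζ k) * r k‖ ^ 2 : ℝ) : ℂ)
        = (1 + (ρ:ℂ)^2) * (r k * (starRingEnd ℂ) (r k))
          + ((ρ:ℂ) * (ζ k * r k * (starRingEnd ℂ) (r k))
          + (ρ:ℂ) * (starRingEnd ℂ) (ζ k * r k * (starRingEnd ℂ) (r k))) := by
      intro k
      rw [habs2]
      simp only [map_mul, map_add, map_one, Complex.conj_conj, Complex.conj_ofReal]
      linear_combination ((ρ:ℂ)^2 * (r k * (starRingEnd ℂ) (r k))) * hζζ k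
    calc ((∑ k, ‖(1 + ρ * ζ k) * r k‖ ^ 2 : ℝ) : ℂ)
        = ∑ k, ((1 + (ρ:ℂ)^2) * (r k * (starRingEnd ℂ) (r k))
          + ((ρ:ℂ) * (ζ k * r k * (starRingEnd ℂ) (r k))
          + (ρ:ℂ) * (starRingEnd ℂ) (ζ k * r k * (starRingEnd ℂ) (r k)))) := by
          rw [Complex.ofReal_sum]
          exact Finset.sum_congr rfl fun k _ => hpt k
      _ = (1 + (ρ:ℂ)^2) * S + ρ * (W + (starRingEnd ℂ) W) := by
          rw [Finset.sum_add_distrib, Finset.sum_add_distrib,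
            ← Finset.mul_sum, ← Finset.mul_sum, ← Finset.mul_sum,
            ← map_sum, ← hSC, ← hWdef]
          ring
  -- first claim
  have hlam2 : lam = (1 + ρ * (starRingEnd ℂ) ω) / ((1 + ρ ^ 2 + 2 * ρ * ω.re : ℝ) : ℂ) := by
    rw [hlam, hN, hM, hcW, hWω]
    have hA : (1 + (ρ:ℂ)^2) * S + ρ * (ω * S + (starRingEnd ℂ) ω * S)
        = (S:ℂ) * ((1 + ρ ^ 2 + 2 * ρ * ω.re : ℝ) : ℂ) := by
      rw [hDc]; ring
    have hB : (S:ℂ) + ρ * ((starRingEnd ℂ) ω * S)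
        = (S:ℂ) * (1 + ρ * (starRingEnd ℂ) ω) := by ring
    rw [hA, hB, mul_div_mul_left _ _ hSne]
  have hρne : (ρ:ℂ) ≠ 0 := by exact_mod_cast ne_of_gt h1
  have hne1 : 1 + (ρ:ℂ) * (starRingEnd ℂ) ω ≠ 0 := by
    intro h
    have h5 : (ρ:ℂ) * (starRingEnd ℂ) ω = -1 := by linear_combination h
    have h6 : ‖(ρ:ℂ) * (starRingEnd ℂ) ω‖ = 1 := by rw [h5]; simp
    rw [norm_mul, Complex.norm_real, Complex.norm_conj, Real.norm_eq_abs, abs_of_pos h1] at h6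
    nlinarith [habsω]
  have hne1' : (ρ:ℂ) * (starRingEnd ℂ) ω + 1 ≠ 0 := by
    intro h; exact hne1 (by linear_combination h)
  -- second claim
  have hT2 : T = (ω + ρ) / (ρ * (starRingEnd ℂ) ω + 1) := by
    have hsub : 1 - lam = (ρ:ℂ) * (ω + ρ) / ((1 + ρ ^ 2 + 2 * ρ * ω.re : ℝ) : ℂ) := by
      rw [hlam2]
      rw [eq_div_iff hDcne, sub_mul, div_mul_cancel₀ _ hDcne, hDc]
      ring
    have hmul : (ρ:ℂ) * lam
        = (ρ:ℂ) * (1 + ρ * (starRingEnd ℂ) ω) / ((1 + ρ ^ 2 + 2 * ρ * ω.re : ℝ) : ℂ) := by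
      rw [hlam2]; ring
    rw [hT, hsub, hmul]
    rw [div_div_div_comm, div_self hDcne, div_one]
    rw [div_eq_div_iff (by exact mul_ne_zero hρne hne1) hne1']
    ring
  -- third claim: conjugate of lam
  have hclam : (starRingEnd ℂ) lam
      = (1 + ρ * ω) / ((1 + ρ ^ 2 + 2 * ρ * ω.re : ℝ) : ℂ) := by
    rw [hlam2, map_div₀, map_add, map_mul, map_one, Complex.conj_conj,
      Complex.conj_ofReal, Complex.conj_ofReal]
  set Q : ℝ := ∑ k, ‖r k - lam * ((1 + ρ * ζ k) * r k)‖ ^ 2 with hQdef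
  have hQC : (Q : ℂ)
      = (1 - lam - (starRingEnd ℂ) lam + lam * (starRingEnd ℂ) lam * (1 + (ρ:ℂ)^2)) * S
        + ((ρ:ℂ) * (lam * (starRingEnd ℂ) lam - lam) * W
        + (ρ:ℂ) * (lam * (starRingEnd ℂ) lam - (starRingEnd ℂ) lam) * (starRingEnd ℂ) W) := by
    have hpt : ∀ k : Fin d, ((‖r k - lam * ((1 + ρ * ζ k) * r k)‖ ^ 2 : ℝ) : ℂ)
        = (1 - lam - (starRingEnd ℂ) lam + lam * (starRingEnd ℂ) lam * (1 + (ρ:ℂ)^2))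
            * (r k * (starRingEnd ℂ) (r k))
          + ((ρ:ℂ) * (lam * (starRingEnd ℂ) lam - lam) * (ζ k * r k * (starRingEnd ℂ) (r k))
          + (ρ:ℂ) * (lam * (starRingEnd ℂ) lam - (starRingEnd ℂ) lam)
            * (starRingEnd ℂ) (ζ k * r k * (starRingEnd ℂ) (r k))) := by
      intro k
      rw [habs2]
      simp only [map_mul, map_add, map_sub, map_one, Complex.conj_conj, Complex.conj_ofReal]
      linear_combination ((ρ:ℂ)^2 * lam * (starRingEnd ℂ) lam * (r k * (starRingEnd ℂ) (r k))) * hζζ k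
    calc (Q : ℂ) = ∑ k, ((1 - lam - (starRingEnd ℂ) lam
            + lam * (starRingEnd ℂ) lam * (1 + (ρ:ℂ)^2)) * (r k * (starRingEnd ℂ) (r k))
          + ((ρ:ℂ) * (lam * (starRingEnd ℂ) lam - lam) * (ζ k * r k * (starRingEnd ℂ) (r k))
          + (ρ:ℂ) * (lam * (starRingEnd ℂ) lam - (starRingEnd ℂ) lam)
            * (starRingEnd ℂ) (ζ k * r k * (starRingEnd ℂ) (r k)))) := by
          rw [hQdef, Complex.ofReal_sum]
          exact Finset.sum_congr rfl fun k _ => hpt k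
      _ = _ := by
          rw [Finset.sum_add_distrib, Finset.sum_add_distrib,
            ← Finset.mul_sum, ← Finset.mul_sum, ← Finset.mul_sum,
            ← map_sum, ← hSC, ← hWdef]
  -- key real identity
  have hkey : Q * (1 + ρ ^ 2 + 2 * ρ * ω.re) = ρ ^ 2 * (1 - ‖ω‖ ^ 2) * S := by
    have hQ2 : (Q:ℂ) * ((1 + ρ ^ 2 + 2 * ρ * ω.re : ℝ) : ℂ)
        = (ρ:ℂ)^2 * (1 - ω * (starRingEnd ℂ) ω) * S := by
      rw [hQC, hcW, hWω, hclam, hlam2, hDc]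
      have hDne' : 1 + (ρ:ℂ)^2 + ρ * (ω + (starRingEnd ℂ) ω) ≠ 0 := by
        rw [← hDc]; exact hDcne
      field_simp
      ring
    apply Complex.ofReal_injective
    rw [Complex.ofReal_mul, Complex.ofReal_mul, Complex.ofReal_mul,
      Complex.ofReal_sub, Complex.ofReal_one, habs2 ω, Complex.ofReal_pow]
    exact hQ2
  have : Q / S = ρ ^ 2 * (1 - ‖ω‖ ^ 2) / (1 + ρ ^ 2 + 2 * ρ * ω.re) := by
    rw [div_eq_div_iff (ne_of_gt hS0) (ne_of_gt hDr)]
    linear_combination hkey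
  exact ⟨hlam2, hT2, this⟩
end

section
/- With A = I + ρU, U unitary diagonal with unimodular entries, 0 < ρ < 1, and ω_n = ⟨U r_n, r_n⟩/⟨r_n, r_n⟩, one has |ω_n| ≤ 1 and the following are equivalent as n → ∞: (a) q_n → ρ; (b) ω_n → −ρ; (c) λ_n → 1; (d) T_n → 0. -/
open Finset Filter Complex

lemma auxN (d : ℕ) (ρ : ℝ) (ζ : Fin d → ℂ) (v : Fin d → ℂ) :
    (∑ k, v k * (starRingEnd ℂ) ((1 + ρ * ζ k) * v k))
      = ((∑ k, Complex.normSq (v k) : ℝ) : ℂ)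
        + ρ * (starRingEnd ℂ) (∑ k, ζ k * v k * (starRingEnd ℂ) (v k)) := by
  rw [map_sum, Finset.mul_sum]
  push_cast
  rw [← Finset.sum_add_distrib]
  refine Finset.sum_congr rfl fun k _ => ?_
  have h := Complex.mul_conj (v k)
  simp only [map_mul, map_add, map_one, Complex.conj_ofReal, Complex.conj_conj]
  ring_nf
  rw [h]

lemma auxW (d : ℕ) (ζ : Fin d → ℂ) (v : Fin d → ℂ) :
    (∑ k, ζ k * v k * (starRingEnd ℂ) (v k)) = ∑ k, (Complex.normSq (v k) : ℂ) * ζ k := by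
  refine Finset.sum_congr rfl fun k _ => ?_
  rw [mul_assoc, Complex.mul_conj, mul_comm]

lemma auxWle (d : ℕ) (ζ : Fin d → ℂ) (hζ : ∀ k, ‖ζ k‖ = 1) (v : Fin d → ℂ) :
    ‖∑ k, ζ k * v k * (starRingEnd ℂ) (v k)‖ ≤ ∑ k, Complex.normSq (v k) := by
  rw [auxW]
  calc ‖∑ k, (Complex.normSq (v k) : ℂ) * ζ k‖
      ≤ ∑ k, ‖(Complex.normSq (v k) : ℂ) * ζ k‖ := norm_sum_le _ _
    _ = ∑ k, Complex.normSq (v k) := by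
        refine Finset.sum_congr rfl fun k _ => ?_
        rw [norm_mul, hζ, mul_one, Complex.norm_real, Real.norm_eq_abs,
          _root_.abs_of_nonneg (Complex.normSq_nonneg _)]

lemma auxD (d : ℕ) (ρ : ℝ) (ζ : Fin d → ℂ) (hζ : ∀ k, ‖ζ k‖ = 1) (v : Fin d → ℂ) :
    (∑ k, ‖(1 + ρ * ζ k) * v k‖ ^ 2)
      = (1 + ρ^2) * (∑ k, Complex.normSq (v k))
        + 2 * ρ * (∑ k, ζ k * v k * (starRingEnd ℂ) (v k)).re := by
  rw [auxW, Complex.re_sum, Finset.mul_sum, Finset.mul_sum, ← Finset.sum_add_distrib]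
  refine Finset.sum_congr rfl fun k _ => ?_
  rw [Complex.sq_norm, Complex.normSq_mul]
  have h1 : Complex.normSq (ζ k) = 1 := by
    rw [← Complex.sq_norm, hζ]; norm_num
  have h2 : Complex.normSq (1 + ρ * ζ k) = 1 + ρ^2 + 2 * ρ * (ζ k).re := by
    rw [Complex.normSq_apply] at h1 ⊢
    simp [Complex.add_re, Complex.add_im, Complex.mul_re, Complex.mul_im]
    nlinarith [h1]
  rw [h2]
  simp [Complex.mul_re]
  ring

lemma auxM (d : ℕ) (ρ : ℝ) (ζ : Fin d → ℂ) (v : Fin d → ℂ) :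
    (∑ k, ((1 + ρ * ζ k) * v k) * (starRingEnd ℂ) (v k))
      = ((∑ k, Complex.normSq (v k) : ℝ) : ℂ)
        + ρ * (∑ k, ζ k * v k * (starRingEnd ℂ) (v k)) := by
  rw [Finset.mul_sum]
  push_cast
  rw [← Finset.sum_add_distrib]
  refine Finset.sum_congr rfl fun k _ => ?_
  rw [← Complex.mul_conj]
  ring

lemma auxU (d : ℕ) (ρ : ℝ) (ζ : Fin d → ℂ) (v : Fin d → ℂ) (c : ℂ) :
    (∑ k, ‖v k - c * ((1 + ρ * ζ k) * v k)‖ ^ 2)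
      = (∑ k, Complex.normSq (v k))
        - 2 * (c * (∑ k, ((1 + ρ * ζ k) * v k) * (starRingEnd ℂ) (v k))).re
        + Complex.normSq c * (∑ k, ‖(1 + ρ * ζ k) * v k‖ ^ 2) := by
  rw [Finset.mul_sum, Complex.re_sum, Finset.mul_sum, Finset.mul_sum]
  rw [← Finset.sum_sub_distrib, ← Finset.sum_add_distrib]
  refine Finset.sum_congr rfl fun k _ => ?_
  rw [Complex.sq_norm, Complex.sq_norm]
  simp only [Complex.normSq_apply, Complex.sub_re, Complex.sub_im, Complex.mul_re,
    Complex.mul_im, Complex.add_re, Complex.add_im, Complex.one_re, Complex.one_im,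
    Complex.ofReal_re, Complex.ofReal_im, Complex.conj_re, Complex.conj_im]
  ring

lemma hlpA1 {x A c : ℝ} (hx : 0 ≤ x) (hA : 0 < A) (h : A ≤ c) : x ≤ c * (x / A) := by
  rw [mul_div_assoc', le_div_iff₀ hA]; nlinarith

lemma hlpA2 {x A c : ℝ} (hx : 0 ≤ x) (hc : 0 < c) (h : c ≤ A) : x / A ≤ (1/c) * x := by
  have hA : 0 < A := lt_of_lt_of_le hc h
  rw [one_div, inv_mul_eq_div, div_le_div_iff₀ hA hc]; nlinarith

lemma hlp1 {x Dv c ρ' : ℝ} (hx : 0 ≤ x) (hρ : 0 < ρ') (hD : 0 < Dv) (hub : Dv ≤ c) :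
    x ≤ (c/ρ') * (ρ' * x / Dv) := by
  have he : (c/ρ') * (ρ' * x / Dv) = c * (x / Dv) := by
    field_simp
  rw [he]
  exact hlpA1 hx hD hub

lemma hlp2 {x Dv c ρ' : ℝ} (hx : 0 ≤ x) (hρ : 0 < ρ') (hc : 0 < c) (hlb : c ≤ Dv) :
    ρ' * x / Dv ≤ (ρ'/c) * x := by
  have hD : 0 < Dv := lt_of_lt_of_le hc hlb
  rw [div_mul_eq_mul_div, div_le_div_iff₀ hD hc]
  nlinarith [mul_nonneg hρ.le hx]

/-- Proposition 4.2: |ω_n| ≤ 1, and the following are equivalent: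
(a) q_n → ρ; (b) ω_n → −ρ; (c) λ_n → 1; (d) T_n → 0. -/
theorem stmt7 (d : ℕ) (ρ : ℝ) (h1 : 0 < ρ) (h2 : ρ < 1)
    (ζ : Fin d → ℂ) (hζ : ∀ k, ‖ζ k‖ = 1)
    (r : ℕ → Fin d → ℂ) (hrne : ∀ n, r n ≠ 0)
    (lam : ℕ → ℂ)
    (hlam : ∀ n, lam n = (∑ k, r n k * (starRingEnd ℂ) ((1 + ρ * ζ k) * r n k)) /
      ((∑ k, ‖(1 + ρ * ζ k) * r n k‖ ^ 2 : ℝ) : ℂ))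
    (hrec : ∀ n, r (n+1) = fun k => r n k - lam n * ((1 + ρ * ζ k) * r n k))
    (ω T : ℕ → ℂ) (q : ℕ → ℝ)
    (hω : ∀ n, ω n = (∑ k, ζ k * r n k * (starRingEnd ℂ) (r n k)) /
      ((∑ k, ‖r n k‖ ^ 2 : ℝ) : ℂ))
    (hT : ∀ n, T n = (1 - lam n) / (ρ * lam n))
    (hq : ∀ n, q n = Real.sqrt (∑ k, ‖r (n+1) k‖ ^ 2) /
      Real.sqrt (∑ k, ‖r n k‖ ^ 2)) :
    (∀ n, ‖ω n‖ ≤ 1) ∧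
    (Tendsto q atTop (nhds ρ) ↔ Tendsto ω atTop (nhds (-ρ : ℂ))) ∧
    (Tendsto q atTop (nhds ρ) ↔ Tendsto lam atTop (nhds (1 : ℂ))) ∧
    (Tendsto q atTop (nhds ρ) ↔ Tendsto T atTop (nhds (0 : ℂ))) := by
  set S : ℕ → ℝ := fun n => ∑ k, Complex.normSq (r n k) with hS
  set W : ℕ → ℂ := fun n => ∑ k, ζ k * r n k * (starRingEnd ℂ) (r n k) with hW
  have hSpos : ∀ n, 0 < S n := by
    intro n
    obtain ⟨k, hk⟩ := Function.ne_iff.mp (hrne n)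
    exact Finset.sum_pos' (fun i _ => Complex.normSq_nonneg _)
      ⟨k, Finset.mem_univ k, Complex.normSq_pos.mpr hk⟩
  have hSne : ∀ n, (S n : ℂ) ≠ 0 := fun n => by
    exact_mod_cast Complex.ofReal_ne_zero.mpr (ne_of_gt (hSpos n))
  have habsS : ∀ n, (∑ k, ‖r n k‖ ^ 2) = S n := by
    intro n; exact Finset.sum_congr rfl fun k _ => Complex.sq_norm _
  have hωW : ∀ n, ω n = W n / (S n : ℂ) := by
    intro n; rw [hω n, habsS]
  have hWω : ∀ n, W n = ω n * (S n : ℂ) := by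
    intro n; rw [hωW n, div_mul_cancel₀ _ (hSne n)]
  -- |ω n| ≤ 1
  have habs : ∀ n, ‖ω n‖ ≤ 1 := by
    intro n
    rw [hωW n, norm_div, Complex.norm_real, Real.norm_eq_abs, _root_.abs_of_pos (hSpos n)]
    rw [div_le_one (hSpos n)]
    exact auxWle d ζ hζ (r n)
  -- real part of W
  have hWre : ∀ n, (W n).re = (ω n).re * S n := by
    intro n
    rw [hWω n]
    simp [Complex.mul_re]
  obtain ⟨D, hD⟩ : ∃ D : ℕ → ℝ, D = fun n => 1 + ρ^2 + 2*ρ*(ω n).re := ⟨_, rfl⟩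
  have hre_le : ∀ n, |(ω n).re| ≤ 1 := fun n =>
    le_trans (Complex.abs_re_le_norm _) (habs n)
  have hDlb : ∀ n, (1-ρ)^2 ≤ D n := by
    intro n
    have := abs_le.mp (hre_le n)
    simp only [hD]
    nlinarith [this.1]
  have hDub : ∀ n, D n ≤ (1+ρ)^2 := by
    intro n
    have := abs_le.mp (hre_le n)
    simp only [hD]
    nlinarith [this.2]
  have hDpos : ∀ n, 0 < D n := fun n =>
    lt_of_lt_of_le (by nlinarith) (hDlb n)
  have hDne : ∀ n, (D n) ≠ 0 := fun n => ne_of_gt (hDpos n)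
  -- denominator sum = S n * D n
  have hden : ∀ n, (∑ k, ‖(1 + ρ * ζ k) * r n k‖ ^ 2) = S n * D n := by
    intro n
    rw [auxD d ρ ζ hζ (r n), hWre n]
    simp only [hD]
    ring
  -- lam formula
  have hlamf : ∀ n, lam n = (1 + ρ * (starRingEnd ℂ) (ω n)) / ((D n : ℝ) : ℂ) := by
    intro n
    have hWdef : (∑ k, ζ k * r n k * (starRingEnd ℂ) (r n k)) = W n := rfl
    have hSdef : (∑ k, Complex.normSq (r n k)) = S n := rfl
    rw [hlam n, auxN d ρ ζ (r n), hden n, hWdef, hWω n, hSdef]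
    rw [map_mul, Complex.conj_ofReal]
    push_cast
    rw [div_eq_div_iff (by exact mul_ne_zero (hSne n) (by exact_mod_cast hDne n)) (by exact_mod_cast hDne n)]
    ring
  -- norm of next residual
  have hSnext : ∀ n, S (n+1) = S n * (1 - Complex.normSq (1 + (ρ:ℂ) * ω n) / D n) := by
    intro n
    have hSdef : (∑ k, Complex.normSq (r n k)) = S n := rfl
    have hWdef : (∑ k, ζ k * r n k * (starRingEnd ℂ) (r n k)) = W n := rfl
    set z : ℂ := 1 + (ρ:ℂ) * ω n with hz
    have hzc : (1 : ℂ) + ρ * (starRingEnd ℂ) (ω n) = (starRingEnd ℂ) z := by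
      simp [hz, map_add, map_mul, Complex.conj_ofReal]
    have e1 : S (n+1) = ∑ k, ‖r n k - lam n * ((1 + ρ*ζ k) * r n k)‖^2 := by
      show (∑ k, Complex.normSq (r (n+1) k)) = _
      refine Finset.sum_congr rfl fun k _ => ?_
      rw [hrec n, Complex.sq_norm]
    rw [e1, auxU d ρ ζ (r n) (lam n), auxM d ρ ζ (r n), hSdef, hWdef, hden n, hWω n, hlamf n, hzc]
    have key1 : ((starRingEnd ℂ) z / ((D n : ℝ):ℂ)) * (((S n : ℝ):ℂ) + ρ * (ω n * ((S n : ℝ):ℂ)))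
        = ((S n * Complex.normSq z / D n : ℝ) : ℂ) := by
      have hm : ((S n : ℝ):ℂ) + ρ * (ω n * ((S n : ℝ):ℂ)) = ((S n : ℝ):ℂ) * z := by
        rw [hz]; ring
      rw [hm]
      have hmc := Complex.mul_conj z
      have hDC : ((D n : ℝ):ℂ) ≠ 0 := Complex.ofReal_ne_zero.mpr (hDne n)
      push_cast
      field_simp
      linear_combination ((S n : ℝ):ℂ) * hmc
    rw [key1, Complex.ofReal_re, Complex.normSq_div, Complex.normSq_conj, Complex.normSq_ofReal]
    field_simp [hDne n]
    ring
  -- q facts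
  have hq0 : ∀ n, 0 ≤ q n := by
    intro n; rw [hq n]; positivity
  have hq2 : ∀ n, q n ^ 2 = 1 - Complex.normSq (1 + (ρ:ℂ) * ω n) / D n := by
    intro n
    rw [hq n, habsS, habsS, div_pow, Real.sq_sqrt (le_of_lt (hSpos (n+1))),
      Real.sq_sqrt (le_of_lt (hSpos n)), hSnext n, mul_comm,
      mul_div_assoc, div_self (ne_of_gt (hSpos n)), mul_one]
  have hkey : ∀ n, (ρ^2 - q n^2) * D n = ρ^2 * Complex.normSq (ω n + ρ) := by
    intro n
    rw [hq2 n]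
    have h := hDne n
    field_simp
    rw [hD]
    simp only [Complex.normSq_apply, Complex.add_re, Complex.add_im, Complex.mul_re,
      Complex.mul_im, Complex.one_re, Complex.one_im, Complex.ofReal_re, Complex.ofReal_im]
    ring
  have hqle : ∀ n, q n ≤ ρ := by
    intro n
    have h5 : 0 ≤ ρ^2 - q n^2 := by
      nlinarith [hkey n, Complex.normSq_nonneg (ω n + ρ), hDpos n,
        mul_nonneg (sq_nonneg ρ) (Complex.normSq_nonneg (ω n + ρ))]
    nlinarith [h5, hq0 n, h1]
  -- A := 1 + ρ conj ω facts
  have habsA_ub : ∀ n, ‖1 + (ρ:ℂ) * (starRingEnd ℂ) (ω n)‖ ≤ 1 + ρ := by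
    intro n
    calc ‖1 + (ρ:ℂ) * (starRingEnd ℂ) (ω n)‖
        ≤ ‖(1:ℂ)‖ + ‖(ρ:ℂ) * (starRingEnd ℂ) (ω n)‖ := norm_add_le _ _
      _ ≤ 1 + ρ := by
          rw [norm_one, norm_mul, Complex.norm_real, Real.norm_eq_abs, Complex.norm_conj,
            _root_.abs_of_pos h1]
          nlinarith [habs n, h1.le]
  have habsA_lb : ∀ n, 1 - ρ ≤ ‖1 + (ρ:ℂ) * (starRingEnd ℂ) (ω n)‖ := by
    intro n
    have h3 : ‖(ρ:ℂ) * (starRingEnd ℂ) (ω n)‖ ≤ ρ := by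
      rw [norm_mul, Complex.norm_real, Real.norm_eq_abs, Complex.norm_conj, _root_.abs_of_pos h1]
      nlinarith [habs n, h1.le]
    have h4 := norm_add_le (1 + (ρ:ℂ) * (starRingEnd ℂ) (ω n)) (-((ρ:ℂ) * (starRingEnd ℂ) (ω n)))
    simp only [add_neg_cancel_right, norm_one, norm_neg] at h4
    linarith
  have hAne : ∀ n, (1 + (ρ:ℂ) * (starRingEnd ℂ) (ω n)) ≠ 0 := by
    intro n h
    have := habsA_lb n
    rw [h, norm_zero] at this
    linarith
  have hDcast : ∀ n, ((D n : ℝ) : ℂ) = 1 + (ρ:ℂ)^2 + 2*ρ*((ω n).re : ℂ) := by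
    intro n; rw [hD]; push_cast; ring
  have hconj : ∀ n, (starRingEnd ℂ) (ω n) = 2*((ω n).re:ℂ) - ω n := by
    intro n
    have := Complex.add_conj (ω n)
    rw [eq_sub_iff_add_eq, add_comm]
    rw [this]; push_cast; ring
  have hDCne : ∀ n, ((D n : ℝ):ℂ) ≠ 0 := fun n => Complex.ofReal_ne_zero.mpr (hDne n)
  have hρC : (ρ:ℂ) ≠ 0 := Complex.ofReal_ne_zero.mpr (ne_of_gt h1)
  have hlam1 : ∀ n, lam n - 1 = -((ρ:ℂ) * (ω n + ρ)) / ((D n : ℝ):ℂ) := by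
    intro n
    rw [hlamf n, div_sub_one (hDCne n), hDcast n, hconj n]
    congr 1
    ring
  have hlamne : ∀ n, lam n ≠ 0 := by
    intro n
    rw [hlamf n]
    exact div_ne_zero (hAne n) (hDCne n)
  have hTf : ∀ n, T n = (ω n + ρ) / (1 + (ρ:ℂ) * (starRingEnd ℂ) (ω n)) := by
    intro n
    rw [hT n, hlamf n]
    rw [div_eq_div_iff (by exact mul_ne_zero hρC (div_ne_zero (hAne n) (hDCne n))) (hAne n)]
    field_simp [hDCne n]
    rw [hDcast n, hconj n]
    ring
  -- norm identities
  have hnlam : ∀ n, ‖lam n - 1‖ = ρ * ‖ω n + ρ‖ / D n := by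
    intro n
    rw [hlam1 n, norm_div, norm_neg, norm_mul,
      Complex.norm_real, Complex.norm_real, Real.norm_eq_abs, Real.norm_eq_abs, _root_.abs_of_pos h1,
      _root_.abs_of_pos (hDpos n)]
  have hnT : ∀ n, ‖T n‖ = ‖ω n + ρ‖ / ‖1 + (ρ:ℂ) * (starRingEnd ℂ) (ω n)‖ := by
    intro n
    rw [hTf n, norm_div]
  -- the pivot: e n := |ω n + ρ| → 0
  set e : ℕ → ℝ := fun n => ‖ω n + ρ‖ with he
  have he0 : ∀ n, 0 ≤ e n := fun n => norm_nonneg _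
  have heE : ∀ n, Complex.normSq (ω n + ρ) = e n * e n := by
    intro n
    rw [← Complex.sq_norm]; rw [he]; ring
  have hEe : ∀ n, e n = Real.sqrt (Complex.normSq (ω n + ρ)) := by
    intro n
    rw [heE n, Real.sqrt_mul_self (he0 n)]
  have hEiff : Tendsto e atTop (nhds 0) ↔
      Tendsto (fun n => Complex.normSq (ω n + ρ)) atTop (nhds 0) := by
    constructor
    · intro h
      have := h.mul h
      rw [mul_zero] at this
      exact this.congr fun n => (heE n).symm
    · intro h
      have := (Real.continuous_sqrt.tendsto 0).comp h
      rw [Real.sqrt_zero] at this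
      exact this.congr fun n => (hEe n).symm
  -- (b) ↔ e → 0
  have iff_b : Tendsto ω atTop (nhds (-ρ : ℂ)) ↔ Tendsto e atTop (nhds 0) := by
    rw [tendsto_iff_norm_sub_tendsto_zero]
    constructor
    · intro h
      exact h.congr fun n => by rw [he]; simp [sub_neg_eq_add]
    · intro h
      exact h.congr fun n => by rw [he]; simp [sub_neg_eq_add]
  -- (a) ↔ e → 0
  have iff_a : Tendsto q atTop (nhds ρ) ↔ Tendsto e atTop (nhds 0) := by
    rw [hEiff]
    constructor
    · intro h
      have h' : Tendsto (fun n => ρ - q n) atTop (nhds 0) := by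
        simpa using (tendsto_const_nhds (x := ρ)).sub h
      apply squeeze_zero (fun n => Complex.normSq_nonneg _)
        (g := fun n => (2*(1+ρ)^2/ρ) * (ρ - q n))
      · intro n
        rw [div_mul_eq_mul_div, le_div_iff₀ h1]
        have hc : 0 ≤ (ρ - q n) * (ρ + q n) :=
          mul_nonneg (by linarith [hqle n]) (by linarith [hq0 n])
        have h6 : (ρ - q n) * (ρ + q n) * D n ≤ (ρ - q n) * (ρ + q n) * (1+ρ)^2 :=
          mul_le_mul_of_nonneg_left (hDub n) hc
        have h7 : ρ^2 * Complex.normSq (ω n + ρ) = (ρ - q n) * (ρ + q n) * D n := by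
          linear_combination -hkey n
        have h8 : ((ρ - q n) * (1+ρ)^2) * (ρ + q n) ≤ ((ρ - q n) * (1+ρ)^2) * (2*ρ) :=
          mul_le_mul_of_nonneg_left (by linarith [hqle n])
            (mul_nonneg (by linarith [hqle n]) (sq_nonneg (1+ρ)))
        nlinarith [h6, h7, h8, h1, Complex.normSq_nonneg (ω n + ρ)]
      · simpa using h'.const_mul (2*(1+ρ)^2/ρ)
    · intro h
      have h' : Tendsto (fun n => ρ - q n) atTop (nhds 0) := by
        apply squeeze_zero (fun n => by linarith [hqle n])
          (g := fun n => (ρ/(1-ρ)^2) * Complex.normSq (ω n + ρ))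
        · intro n
          rw [div_mul_eq_mul_div, le_div_iff₀ (by nlinarith)]
          have hc : 0 ≤ (ρ - q n) * (ρ + q n) :=
            mul_nonneg (by linarith [hqle n]) (by linarith [hq0 n])
          have h6 : (ρ - q n) * (ρ + q n) * (1-ρ)^2 ≤ (ρ - q n) * (ρ + q n) * D n :=
            mul_le_mul_of_nonneg_left (hDlb n) hc
          have h7 : ρ^2 * Complex.normSq (ω n + ρ) = (ρ - q n) * (ρ + q n) * D n := by
            linear_combination -hkey n
          have h8 : ((ρ - q n) * (1-ρ)^2) * ρ ≤ ((ρ - q n) * (1-ρ)^2) * (ρ + q n) :=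
            mul_le_mul_of_nonneg_left (by linarith [hq0 n])
              (mul_nonneg (by linarith [hqle n]) (sq_nonneg (1-ρ)))
          nlinarith [h6, h7, h8, h1, Complex.normSq_nonneg (ω n + ρ)]
        · simpa using h.const_mul (ρ/(1-ρ)^2)
      have := (tendsto_const_nhds (x := ρ)).sub h'
      simpa using this
  -- (c) ↔ e → 0
  have iff_c : Tendsto lam atTop (nhds (1 : ℂ)) ↔ Tendsto e atTop (nhds 0) := by
    rw [tendsto_iff_norm_sub_tendsto_zero]
    constructor
    · intro h
      apply squeeze_zero he0 (g := fun n => ((1+ρ)^2/ρ) * ‖lam n - 1‖)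
      · intro n
        simp only [he]
        rw [hnlam n]
        exact hlp1 (norm_nonneg _) h1 (hDpos n) (hDub n)
      · simpa using h.const_mul ((1+ρ)^2/ρ)
    · intro h
      apply squeeze_zero (fun n => norm_nonneg _) (g := fun n => (ρ/(1-ρ)^2) * e n)
      · intro n
        simp only [he]
        rw [hnlam n]
        exact hlp2 (norm_nonneg _) h1 (by nlinarith) (hDlb n)
      · simpa using h.const_mul (ρ/(1-ρ)^2)
  -- (d) ↔ e → 0
  have iff_d : Tendsto T atTop (nhds (0 : ℂ)) ↔ Tendsto e atTop (nhds 0) := by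
    rw [tendsto_iff_norm_sub_tendsto_zero]
    simp only [sub_zero]
    constructor
    · intro h
      apply squeeze_zero he0 (g := fun n => (1+ρ) * ‖T n‖)
      · intro n
        simp only [he]
        rw [hnT n]
        have hApos : 0 < ‖1 + (ρ:ℂ) * (starRingEnd ℂ) (ω n)‖ := by
          linarith [habsA_lb n]
        exact hlpA1 (norm_nonneg _) hApos (habsA_ub n)
      · simpa using h.const_mul (1+ρ)
    · intro h
      apply squeeze_zero (fun n => norm_nonneg _) (g := fun n => (1/(1-ρ)) * e n)
      · intro n
        simp only [he]
        rw [hnT n]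
        have hApos : 0 < ‖1 + (ρ:ℂ) * (starRingEnd ℂ) (ω n)‖ := by
          linarith [habsA_lb n]
        exact hlpA2 (norm_nonneg _) (by linarith) (habsA_lb n)
      · simpa using h.const_mul (1/(1-ρ))
  exact ⟨habs, iff_a.trans iff_b.symm, iff_a.trans iff_c.symm, iff_a.trans iff_d.symm⟩
end

section
/- If −ρ does not belong to the convex hull of {ζ₁,…,ζ_d}, then for the Orthomin(1) iteration on (I+ρU)x = b with U = diag[ζ₁,…,ζ_d], the sequence q_n = ‖r_{n+1}‖/‖r_n‖ does not converge to ρ. -/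
open Finset Filter

/-- Proposition 4.5: if −ρ ∉ Hull(ζ₁,…,ζ_d), then the Orthomin(1) residual
ratios q_n = ‖r_{n+1}‖/‖r_n‖ do not converge to ρ. -/
theorem stmt9 (d : ℕ) (ρ : ℝ) (h1 : 0 < ρ) (h2 : ρ < 1)
    (ζ : Fin d → ℂ) (hζ : ∀ k, ‖ζ k‖ = 1)
    (hhull : (-ρ : ℂ) ∉ convexHull ℝ (Set.range ζ))
    (r : ℕ → Fin d → ℂ) (hrne : ∀ n, r n ≠ 0)
    (lam : ℕ → ℂ)
    (hlam : ∀ n, lam n = (∑ k, r n k * (starRingEnd ℂ) ((1 + ρ * ζ k) * r n k)) /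
      ((∑ k, ‖(1 + ρ * ζ k) * r n k‖ ^ 2 : ℝ) : ℂ))
    (hrec : ∀ n, r (n+1) = fun k => r n k - lam n * ((1 + ρ * ζ k) * r n k))
    (q : ℕ → ℝ)
    (hq : ∀ n, q n = Real.sqrt (∑ k, ‖r (n+1) k‖ ^ 2) /
      Real.sqrt (∑ k, ‖r n k‖ ^ 2)) :
    ¬ Tendsto q atTop (nhds ρ) := by
  -- basic quantities
  set N : ℕ → ℝ := fun n => ∑ k, Complex.normSq (r n k) with hN
  set S : ℕ → ℂ := fun n => ∑ k, (Complex.normSq (r n k) : ℂ) * ζ k with hS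
  set B : ℕ → ℝ := fun n => ∑ k, Complex.normSq ((1 + ρ * ζ k) * r n k) with hB
  have hNpos : ∀ n, 0 < N n := by
    intro n
    obtain ⟨k, hk⟩ : ∃ k, r n k ≠ 0 := by
      by_contra h
      push_neg at h
      exact hrne n (funext h)
    have : 0 < Complex.normSq (r n k) := Complex.normSq_pos.2 hk
    exact this.trans_le (Finset.single_le_sum (fun i _ => Complex.normSq_nonneg _)
      (Finset.mem_univ k))
  -- |ζ k|² = 1
  have hζsq : ∀ k, Complex.normSq (ζ k) = 1 := by
    intro k
    rw [← Complex.sq_norm, hζ k, one_pow]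
  have hζre : ∀ k, |(ζ k).re| ≤ 1 := by
    intro k
    have := Complex.abs_re_le_norm (ζ k)
    rwa [hζ k] at this
  -- Re S
  have hre : ∀ n, (S n).re = ∑ k, Complex.normSq (r n k) * (ζ k).re := by
    intro n
    rw [hS]
    rw [Complex.re_sum]
    exact Finset.sum_congr rfl fun k _ => Complex.re_ofReal_mul _ _
  -- B in terms of N and Re S
  have hBeq : ∀ n, B n = (1 + ρ ^ 2) * N n + 2 * ρ * (S n).re := by
    intro n
    rw [hB, hre n, hN]
    simp only [Finset.mul_sum, ← Finset.sum_add_distrib]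
    refine Finset.sum_congr rfl fun k _ => ?_
    rw [Complex.normSq_mul]
    have : Complex.normSq (1 + ρ * ζ k) = 1 + ρ ^ 2 + 2 * ρ * (ζ k).re := by
      rw [Complex.normSq_add, Complex.normSq_mul, Complex.normSq_ofReal, hζsq k,
        Complex.normSq_one, one_mul, map_mul, Complex.conj_ofReal]
      have hconjre : ((ρ : ℂ) * (starRingEnd ℂ) (ζ k)).re = ρ * (ζ k).re := by
        rw [Complex.re_ofReal_mul, Complex.conj_re]
      rw [hconjre]
      ring
    rw [this]; ring
  -- Re S bounds
  have hSre : ∀ n, |(S n).re| ≤ N n := by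
    intro n
    rw [hre n, hN]
    refine (Finset.abs_sum_le_sum_abs _ _).trans (Finset.sum_le_sum fun k _ => ?_)
    rw [abs_mul, abs_of_nonneg (Complex.normSq_nonneg _)]
    calc Complex.normSq (r n k) * |(ζ k).re| ≤ Complex.normSq (r n k) * 1 :=
          mul_le_mul_of_nonneg_left (hζre k) (Complex.normSq_nonneg _)
      _ = Complex.normSq (r n k) := mul_one _
  have hBlb : ∀ n, (1 - ρ) ^ 2 * N n ≤ B n := by
    intro n
    have h := (abs_le.1 (hSre n)).1
    rw [hBeq n]; nlinarith [hNpos n]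
  have hBpos : ∀ n, 0 < B n := by
    intro n
    have h := hBlb n
    have : 0 < (1 - ρ) ^ 2 * N n := mul_pos (pow_pos (by linarith) 2) (hNpos n)
    linarith
  have hBub : ∀ n, B n ≤ 4 * N n := by
    intro n
    have h := (abs_le.1 (hSre n)).2
    have h3 : 2 * ρ * (S n).re ≤ 2 * ρ * N n := by nlinarith
    have h4 : (ρ ^ 2 + 2 * ρ - 3) * N n ≤ 0 :=
      mul_nonpos_iff.2 (Or.inr ⟨by nlinarith, (hNpos n).le⟩)
    rw [hBeq n]
    linarith
  -- the numerator sum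
  have haeq : ∀ n, (∑ k, r n k * (starRingEnd ℂ) ((1 + ρ * ζ k) * r n k)) =
      (N n : ℂ) + ρ * (starRingEnd ℂ) (S n) := by
    intro n
    rw [hS, hN]
    rw [map_sum, Finset.mul_sum, Complex.ofReal_sum, ← Finset.sum_add_distrib]
    refine Finset.sum_congr rfl fun k _ => ?_
    have e1 : r n k * (starRingEnd ℂ) ((1 + ρ * ζ k) * r n k) =
        (starRingEnd ℂ) (1 + ρ * ζ k) * (r n k * (starRingEnd ℂ) (r n k)) := by
      rw [map_mul]; ring
    rw [e1, Complex.mul_conj, map_add, map_mul, map_one, Complex.conj_ofReal, map_mul,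
      Complex.conj_ofReal]
    ring
  -- norm-squared of next residual
  have hNrec : ∀ n, N (n + 1) = N n -
      Complex.normSq ((N n : ℂ) + ρ * (starRingEnd ℂ) (S n)) / B n := by
    intro n
    set a : ℂ := (N n : ℂ) + ρ * (starRingEnd ℂ) (S n) with ha
    have hL : lam n = a / (B n : ℂ) := by
      rw [hlam n, haeq n]
      congr 2
      exact Finset.sum_congr rfl fun k _ => Complex.sq_norm _
    have expand : ∀ k : Fin d, Complex.normSq (r n k - lam n * ((1 + ρ * ζ k) * r n k)) =
        Complex.normSq (r n k)
        - 2 * ((starRingEnd ℂ) (lam n) * (r n k * (starRingEnd ℂ) ((1 + ρ * ζ k) * r n k))).re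
        + Complex.normSq (lam n) * Complex.normSq ((1 + ρ * ζ k) * r n k) := by
      intro k
      rw [Complex.normSq_sub, Complex.normSq_mul]
      have e2 : r n k * (starRingEnd ℂ) (lam n * ((1 + ρ * ζ k) * r n k)) =
          (starRingEnd ℂ) (lam n) * (r n k * (starRingEnd ℂ) ((1 + ρ * ζ k) * r n k)) := by
        rw [map_mul]; ring
      rw [e2]; ring
    have hstep : N (n + 1) = N n - 2 * ((starRingEnd ℂ) (lam n) * a).re
        + Complex.normSq (lam n) * B n := by
      have h0 : N (n + 1) = ∑ k, Complex.normSq (r n k - lam n * ((1 + ρ * ζ k) * r n k)) := by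
        simp only [hN, hrec n]
      rw [h0]
      simp only [expand]
      rw [Finset.sum_add_distrib, Finset.sum_sub_distrib, ← Finset.mul_sum, ← Finset.mul_sum,
        ← Complex.re_sum, ← Finset.mul_sum, haeq n, ← ha]
    have hBne : (B n : ℝ) ≠ 0 := (hBpos n).ne'
    have h5 : ((starRingEnd ℂ) (a / (B n : ℂ)) * a).re = Complex.normSq a / B n := by
      rw [map_div₀, Complex.conj_ofReal, div_mul_eq_mul_div]
      have : (starRingEnd ℂ) a * a = ((Complex.normSq a : ℝ) : ℂ) := by
        rw [mul_comm, Complex.mul_conj]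
      rw [this, ← Complex.ofReal_div, Complex.ofReal_re]
    have h6 : Complex.normSq (a / (B n : ℂ)) = Complex.normSq a / B n ^ 2 := by
      rw [Complex.normSq_div, Complex.normSq_ofReal, sq]
    rw [hstep, hL, h5, h6]
    field_simp
    ring
  -- q n squared
  have hq2 : ∀ n, q n ^ 2 = N (n + 1) / N n := by
    intro n
    have hN1 : (0:ℝ) ≤ N (n+1) := Finset.sum_nonneg fun k _ => Complex.normSq_nonneg _
    have : q n = Real.sqrt (N (n+1)) / Real.sqrt (N n) := by
      rw [hq n]
      congr 1 <;> · congr 1; exact Finset.sum_congr rfl fun k _ => Complex.sq_norm _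
    rw [this, div_pow, Real.sq_sqrt hN1, Real.sq_sqrt (hNpos n).le]
  -- key identity
  have hkey : ∀ n, (ρ ^ 2 - q n ^ 2) * (N n * B n) =
      ρ ^ 2 * Complex.normSq (S n + (ρ * N n : ℝ)) := by
    intro n
    have h1' : Complex.normSq ((N n : ℂ) + ρ * (starRingEnd ℂ) (S n)) =
        N n ^ 2 + 2 * ρ * N n * (S n).re + ρ ^ 2 * Complex.normSq (S n) := by
      rw [Complex.normSq_add, Complex.normSq_mul, Complex.normSq_ofReal, Complex.normSq_ofReal,
        Complex.normSq_conj]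
      have : ((N n : ℂ) * (starRingEnd ℂ) ((ρ : ℂ) * (starRingEnd ℂ) (S n))).re
          = N n * (ρ * (S n).re) := by
        rw [map_mul, Complex.conj_conj, Complex.conj_ofReal, Complex.re_ofReal_mul,
          Complex.re_ofReal_mul]
      rw [this]; ring
    have h2' : Complex.normSq (S n + (ρ * N n : ℝ)) =
        Complex.normSq (S n) + 2 * ρ * N n * (S n).re + ρ ^ 2 * N n ^ 2 := by
      rw [Complex.normSq_add, Complex.normSq_ofReal]
      have : (S n * (starRingEnd ℂ) ((ρ * N n : ℝ) : ℂ)).re = ρ * N n * (S n).re := by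
        rw [Complex.conj_ofReal, mul_comm, Complex.re_ofReal_mul]
      rw [this]; ring
    have hBne : (B n : ℝ) ≠ 0 := (hBpos n).ne'
    have hNne : (N n : ℝ) ≠ 0 := (hNpos n).ne'
    have hBne' : (1 + ρ ^ 2) * N n + 2 * ρ * (S n).re ≠ 0 := (hBeq n) ▸ hBne
    have key : ∀ a b c : ℝ, a ≠ 0 → b ≠ 0 →
        (ρ ^ 2 - (a - c / b) / a) * (a * b) = ρ ^ 2 * a * b - a * b + c := by
      intro a b c ha hb; field_simp; ring
    rw [hq2 n, hNrec n, h1', h2', hBeq n]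
    rw [key _ _ _ hNne hBne']
    ring
  -- define ω
  set ω : ℕ → ℂ := fun n => ((N n : ℝ) : ℂ)⁻¹ * S n with hω
  have hmem : ∀ n, ω n ∈ convexHull ℝ (Set.range ζ) := by
    intro n
    have hcm := Finset.centerMass_mem_convexHull (R := ℝ) (E := ℂ) Finset.univ
      (w := fun k => Complex.normSq (r n k)) (fun i _ => Complex.normSq_nonneg _)
      (hNpos n) (z := ζ) (fun i _ => Set.mem_range_self i)
    have : Finset.univ.centerMass (fun k => Complex.normSq (r n k)) ζ = ω n := by
      rw [Finset.centerMass, hω]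
      simp only [hN, hS, Complex.real_smul, Complex.ofReal_inv, Complex.ofReal_sum]
    rwa [this] at hcm
  -- normSq (ω n + ρ) bound
  have hbound : ∀ n, Complex.normSq (ω n + ρ) ≤ 4 / ρ ^ 2 * (ρ ^ 2 - q n ^ 2) := by
    intro n
    have hNne : (N n : ℝ) ≠ 0 := (hNpos n).ne'
    have hNneC : ((N n : ℝ) : ℂ) ≠ 0 := Complex.ofReal_ne_zero.2 hNne
    have hω' : Complex.normSq (ω n + ρ) * N n ^ 2 = Complex.normSq (S n + (ρ * N n : ℝ)) := by
      have e : ω n + ρ = (S n + ((ρ * N n : ℝ) : ℂ)) / ((N n : ℝ) : ℂ) := by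
        rw [hω]
        field_simp
        push_cast; ring
      rw [e, Complex.normSq_div, Complex.normSq_ofReal]
      field_simp [sq]
    have hk := hkey n
    have hqpos : 0 ≤ ρ ^ 2 - q n ^ 2 := by
      nlinarith [Complex.normSq_nonneg (S n + ((ρ * N n : ℝ) : ℂ)), hNpos n, hBpos n,
        mul_pos (hNpos n) (hBpos n)]
    rw [div_mul_eq_mul_div, le_div_iff₀ (by positivity : (0:ℝ) < ρ ^ 2)]
    nlinarith [hk, hω', hNpos n, hBub n, hqpos,
      mul_le_mul_of_nonneg_left (hBub n) (mul_nonneg hqpos (hNpos n).le),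
      mul_pos (hNpos n) (hNpos n)]
  have hnonneg : ∀ n, 0 ≤ Complex.normSq (ω n + ρ) := fun n => Complex.normSq_nonneg _
  -- conclude
  intro hT
  have hq2T : Tendsto (fun n => ρ ^ 2 - q n ^ 2) atTop (nhds 0) := by
    have h' : Tendsto (fun n => q n ^ 2) atTop (nhds (ρ ^ 2)) := hT.pow 2
    have := Tendsto.sub (tendsto_const_nhds (x := ρ ^ 2)) h'
    simpa using this
  have hupper : Tendsto (fun n => 4 / ρ ^ 2 * (ρ ^ 2 - q n ^ 2)) atTop (nhds 0) := by
    have := hq2T.const_mul (4 / ρ ^ 2)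
    simpa using this
  have hnsT : Tendsto (fun n => Complex.normSq (ω n + ρ)) atTop (nhds 0) :=
    tendsto_of_tendsto_of_tendsto_of_le_of_le tendsto_const_nhds hupper hnonneg hbound
  have hωT : Tendsto ω atTop (nhds (-ρ : ℂ)) := by
    rw [tendsto_iff_dist_tendsto_zero]
    have hs : Tendsto (fun n => Real.sqrt (Complex.normSq (ω n + ρ))) atTop (nhds 0) := by
      have := (Real.continuous_sqrt.tendsto 0).comp hnsT
      simpa [Function.comp_def] using this
    convert hs using 2 with n
    rw [Complex.dist_eq, Complex.norm_def, sub_neg_eq_add]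
  have hcl : IsClosed (convexHull ℝ (Set.range ζ)) :=
    ((Set.finite_range ζ).isCompact_convexHull ℝ).isClosed
  exact hhull (hcl.mem_of_tendsto hωT (Filter.Eventually.of_forall hmem))
end

section
/- (Orthomin(1) in dimension 2) Let d = 2, A = diag[μ₁, μ₂] with μ₁, μ₂ nonzero, and r_0 ∈ ℂ² with both entries nonzero. Define r_{n+1} = r_n − λ_n A r_n with λ_n = ⟨r_n, A r_n⟩/‖A r_n‖². Then |r₁²|/|r₁¹| = (|μ₁|/|μ₂|)·(|r₀¹|/|r₀²|), where superscripts denote components; consequently |r₂²|/|r₂¹| = |r₀²|/|r₀¹|, the sequence ω_n = (ζ₁|r_n¹|² + ζ₂|r_n²|²)/‖r_n‖² is periodic with period 2, and the ratio q_n = ‖r_{n+1}‖/‖r_n‖ is constant in n. -/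
open Finset


open Complex

lemma key_step (μ₁ μ₂ a b : ℂ) (hμ1 : μ₁ ≠ 0) (hμ2 : μ₂ ≠ 0)
    (ha : a ≠ 0) (hb : b ≠ 0) (lam : ℂ)
    (hlam : lam = (a * (starRingEnd ℂ) (μ₁*a) + b * (starRingEnd ℂ) (μ₂*b)) /
      (μ₁*a*(starRingEnd ℂ) (μ₁*a) + μ₂*b*(starRingEnd ℂ) (μ₂*b))) :
    ‖a - lam*(μ₁*a)‖ =
      ‖μ₁-μ₂‖ * ‖μ₂‖ * ‖b‖^2 * ‖a‖ /
        (‖μ₁‖^2 * ‖a‖^2 + ‖μ₂‖^2 * ‖b‖^2) ∧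
    ‖b - lam*(μ₂*b)‖ =
      ‖μ₁-μ₂‖ * ‖μ₁‖ * ‖a‖^2 * ‖b‖ /
        (‖μ₁‖^2 * ‖a‖^2 + ‖μ₂‖^2 * ‖b‖^2) := by
  set N : ℝ := normSq μ₁ * normSq a + normSq μ₂ * normSq b with hNdef
  have hN : 0 < N := by
    have := normSq_pos.2 hμ1
    have := normSq_pos.2 hμ2
    have := normSq_pos.2 ha
    have := normSq_pos.2 hb
    positivity
  have hden : μ₁*a*(starRingEnd ℂ) (μ₁*a) + μ₂*b*(starRingEnd ℂ) (μ₂*b) = (N:ℂ) := by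
    rw [Complex.mul_conj, Complex.mul_conj, hNdef]
    push_cast [Complex.normSq_mul]
    ring
  have hNne : (N:ℂ) ≠ 0 := by exact_mod_cast hN.ne'
  have hNeq : (N:ℂ) = μ₁ * (starRingEnd ℂ) μ₁ * (a * (starRingEnd ℂ) a)
      + μ₂ * (starRingEnd ℂ) μ₂ * (b * (starRingEnd ℂ) b) := by
    rw [hNdef]; push_cast [← Complex.mul_conj]; ring
  have h0 : a - lam*(μ₁*a) = (μ₂-μ₁) * (starRingEnd ℂ) μ₂ * (b * (starRingEnd ℂ) b) * a / (N:ℂ) := by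
    rw [hlam, hden]
    field_simp
    rw [hNeq]; simp only [map_mul]; ring
  have h1 : b - lam*(μ₂*b) = (μ₁-μ₂) * (starRingEnd ℂ) μ₁ * (a * (starRingEnd ℂ) a) * b / (N:ℂ) := by
    rw [hlam, hden]
    field_simp
    rw [hNeq]; simp only [map_mul]; ring
  have hNabs : N = ‖μ₁‖^2 * ‖a‖^2 + ‖μ₂‖^2 * ‖b‖^2 := by
    rw [hNdef]; simp [Complex.sq_norm]
  constructor
  · rw [h0, norm_div, norm_mul, norm_mul, norm_mul, Complex.mul_conj, Complex.norm_conj,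
      Complex.norm_real, Complex.norm_real, Real.norm_eq_abs, Real.norm_eq_abs, abs_of_pos hN, norm_sub_rev, hNabs,
      _root_.abs_of_nonneg (normSq_nonneg b), Complex.normSq_eq_norm_sq]
  · rw [h1, norm_div, norm_mul, norm_mul, norm_mul, Complex.mul_conj, Complex.norm_conj,
      Complex.norm_real, Complex.norm_real, Real.norm_eq_abs, Real.norm_eq_abs, abs_of_pos hN, hNabs,
      _root_.abs_of_nonneg (normSq_nonneg a), Complex.normSq_eq_norm_sq]

lemma real_step (m1 m2 K : ℝ) (hm1 : 0 < m1) (hm2 : 0 < m2) (hK : 0 < K)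
    (x y : ℕ → ℝ) (hx : ∀ n, 0 < x n) (hy : ∀ n, 0 < y n)
    (hrx : ∀ n, x (n+1) = K * m2 * y n^2 * x n / (m1^2 * x n^2 + m2^2 * y n^2))
    (hry : ∀ n, y (n+1) = K * m1 * x n^2 * y n / (m1^2 * x n^2 + m2^2 * y n^2)) :
    (∀ n, y (n+1) / x (n+1) = (m1/m2) * (x n / y n)) ∧
    (∀ n, y (n+2) * x n = y n * x (n+2)) ∧
    (∀ n, (x (n+2)^2 + y (n+2)^2) * (x n^2 + y n^2) = (x (n+1)^2 + y (n+1)^2)^2) := by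
  have hD : ∀ n, 0 < m1^2 * x n^2 + m2^2 * y n^2 := by
    intro n; have := hx n; have := hy n; positivity
  refine ⟨?_, ?_, ?_⟩
  · intro n
    rw [hrx n, hry n]
    have := (hD n).ne'
    have := (hx n).ne'
    have := (hy n).ne'
    field_simp
  · intro n
    rw [hrx (n+1), hry (n+1)]
    rw [hrx n, hry n]
    have h0 := (hD n).ne'
    have h1 := (hx n).ne'
    have h2 := (hy n).ne'
    field_simp
  · intro n
    rw [hrx (n+1), hry (n+1), hrx n, hry n]
    have h0 := (hD n).ne'
    have h1 := (hx n).ne'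
    have h2 := (hy n).ne'
    field_simp
    ring

/-- Orthomin(1) in dimension 2: |r₁²|/|r₁¹| = (|μ₁|/|μ₂|)(|r₀¹|/|r₀²|),
hence |r₂²|/|r₂¹| = |r₀²|/|r₀¹|, ω_n is 2-periodic, and q_n is constant. -/
theorem stmt11 (μ₁ μ₂ : ℂ) (hμ1 : μ₁ ≠ 0) (hμ2 : μ₂ ≠ 0) (hne : μ₁ ≠ μ₂)
    (ζ₁ ζ₂ : ℂ)
    (μ : Fin 2 → ℂ) (hμ : μ = ![μ₁, μ₂])
    (r : ℕ → Fin 2 → ℂ) (hrne : ∀ n k, r n k ≠ 0)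
    (lam : ℕ → ℂ)
    (hlam : ∀ n, lam n = (∑ k, r n k * (starRingEnd ℂ) (μ k * r n k)) /
      (∑ k, (μ k * r n k) * (starRingEnd ℂ) (μ k * r n k)))
    (hrec : ∀ n, r (n+1) = fun k => r n k - lam n * (μ k * r n k))
    (ω : ℕ → ℂ)
    (hω : ∀ n, ω n = (ζ₁ * ((‖r n 0‖ ^ 2 : ℝ) : ℂ) +
        ζ₂ * ((‖r n 1‖ ^ 2 : ℝ) : ℂ)) /
      ((‖r n 0‖ ^ 2 + ‖r n 1‖ ^ 2 : ℝ) : ℂ))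
    (q : ℕ → ℝ)
    (hq : ∀ n, q n = Real.sqrt (‖r (n+1) 0‖ ^ 2 + ‖r (n+1) 1‖ ^ 2) /
      Real.sqrt (‖r n 0‖ ^ 2 + ‖r n 1‖ ^ 2)) :
    ‖r 1 1‖ / ‖r 1 0‖ =
      (‖μ₁‖ / ‖μ₂‖) * (‖r 0 0‖ / ‖r 0 1‖) ∧
    ‖r 2 1‖ / ‖r 2 0‖ = ‖r 0 1‖ / ‖r 0 0‖ ∧
    (∀ n, ω (n+2) = ω n) ∧ (∀ n, q (n+1) = q n) := by
  subst hμ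
  simp only [Fin.sum_univ_two, Matrix.cons_val_zero, Matrix.cons_val_one, Matrix.head_cons]
    at hlam
  have hrec0 : ∀ n, r (n+1) 0 = r n 0 - lam n * (μ₁ * r n 0) := by
    intro n
    have := congrFun (hrec n) 0
    simpa using this
  have hrec1 : ∀ n, r (n+1) 1 = r n 1 - lam n * (μ₂ * r n 1) := by
    intro n
    have := congrFun (hrec n) 1
    simpa using this
  have key : ∀ n, ‖r (n+1) 0‖ =
      ‖μ₁-μ₂‖ * ‖μ₂‖ * ‖r n 1‖^2 * ‖r n 0‖ /
        (‖μ₁‖^2 * ‖r n 0‖^2 + ‖μ₂‖^2 * ‖r n 1‖^2) ∧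
      ‖r (n+1) 1‖ =
      ‖μ₁-μ₂‖ * ‖μ₁‖ * ‖r n 0‖^2 * ‖r n 1‖ /
        (‖μ₁‖^2 * ‖r n 0‖^2 + ‖μ₂‖^2 * ‖r n 1‖^2) := by
    intro n
    have := key_step μ₁ μ₂ (r n 0) (r n 1) hμ1 hμ2 (hrne n 0) (hrne n 1) (lam n) (hlam n)
    rw [hrec0 n, hrec1 n]
    exact this
  set x : ℕ → ℝ := fun n => ‖r n 0‖ with hxdef
  set y : ℕ → ℝ := fun n => ‖r n 1‖ with hydef
  have hxpos : ∀ n, 0 < x n := fun n => norm_pos_iff.2 (hrne n 0)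
  have hypos : ∀ n, 0 < y n := fun n => norm_pos_iff.2 (hrne n 1)
  have hm1 : 0 < ‖μ₁‖ := norm_pos_iff.2 hμ1
  have hm2 : 0 < ‖μ₂‖ := norm_pos_iff.2 hμ2
  have hK : 0 < ‖μ₁ - μ₂‖ := norm_pos_iff.2 (sub_ne_zero.2 hne)
  obtain ⟨p1, p2, p3⟩ := real_step (‖μ₁‖) (‖μ₂‖) (‖μ₁-μ₂‖)
    hm1 hm2 hK x y hxpos hypos (fun n => (key n).1) (fun n => (key n).2)
  have hS : ∀ n, 0 < x n ^ 2 + y n ^ 2 := by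
    intro n; have := hxpos n; have := hypos n; positivity
  refine ⟨p1 0, ?_, ?_, ?_⟩
  · rw [div_eq_div_iff (hxpos 2).ne' (hxpos 0).ne']
    exact p2 0
  · intro n
    rw [hω (n+2), hω n, div_eq_div_iff (by exact_mod_cast (hS (n+2)).ne')
      (by exact_mod_cast (hS n).ne')]
    have hc : ((y (n+2) : ℂ)) * (x n : ℂ) = (y n : ℂ) * (x (n+2) : ℂ) := by
      exact_mod_cast congrArg (fun t : ℝ => (t : ℂ)) (p2 n)
    push_cast
    linear_combination (ζ₂ - ζ₁) * ((y (n+2) : ℂ) * (x n : ℂ) + (y n : ℂ) * (x (n+2) : ℂ)) * hc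
  · intro n
    rw [hq (n+1), hq n, div_eq_div_iff (Real.sqrt_pos.2 (hS (n+1))).ne' (Real.sqrt_pos.2 (hS n)).ne']
    rw [← Real.sqrt_mul (hS (n+2)).le, p3 n, Real.sqrt_sq (hS (n+1)).le,
      Real.mul_self_sqrt (hS (n+1)).le]
end

section
/- With the moments ω_{n,j} = ⟨Uʲ r_n, r_n⟩/⟨r_n, r_n⟩ for the Orthomin(1) iteration on A = I + ρU (U diagonal unitary), the recurrence ω_{n+1,j} = [(1+|T_n|²)ω_{n,j} − T_n ω_{n,j−1} − conj(T_n) ω_{n,j+1}] / [1+|T_n|² − 2Re(conj(T_n) ω_{n,1})] holds for all j ≥ 1. -/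
open Finset

/-- Proposition 4.4: the moments ω_{n,j} = ⟨Uʲ r_n, r_n⟩/⟨r_n, r_n⟩ satisfy
ω_{n+1,j} = [(1+|T_n|²)ω_{n,j} − T_n ω_{n,j−1} − T̄_n ω_{n,j+1}] /
[1+|T_n|² − 2Re(T̄_n ω_{n,1})] for all j ≥ 1. -/
theorem stmt12 (d : ℕ) (ρ : ℝ) (h1 : 0 < ρ) (h2 : ρ < 1)
    (ζ : Fin d → ℂ) (hζ : ∀ k, ‖ζ k‖ = 1)
    (r r' : Fin d → ℂ) (hr : r ≠ 0) (hr'ne : r' ≠ 0)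
    (lam T : ℂ)
    (hlam : lam = (∑ k, r k * (starRingEnd ℂ) ((1 + ρ * ζ k) * r k)) /
      ((∑ k, ‖(1 + ρ * ζ k) * r k‖ ^ 2 : ℝ) : ℂ))
    (hT : T = (1 - lam) / (ρ * lam))
    (hrec : r' = fun k => r k - lam * ((1 + ρ * ζ k) * r k))
    (ω ω' : ℕ → ℂ)
    (hω : ∀ j, ω j = (∑ k, ζ k ^ j * r k * (starRingEnd ℂ) (r k)) /
      ((∑ k, ‖r k‖ ^ 2 : ℝ) : ℂ))
    (hω' : ∀ j, ω' j = (∑ k, ζ k ^ j * r' k * (starRingEnd ℂ) (r' k)) /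
      ((∑ k, ‖r' k‖ ^ 2 : ℝ) : ℂ)) :
    ∀ j : ℕ, 1 ≤ j →
      ω' j = (((1 + ‖T‖ ^ 2 : ℝ) : ℂ) * ω j - T * ω (j - 1) -
          (starRingEnd ℂ) T * ω (j + 1)) /
        ((1 + ‖T‖ ^ 2 - 2 * ((starRingEnd ℂ) T * ω 1).re : ℝ) : ℂ) := by
  intro j hj
  obtain ⟨m, rfl⟩ : ∃ m, j = m + 1 := ⟨j - 1, (Nat.succ_pred_eq_of_pos hj).symm⟩
  clear hj hlam h2
  by_cases hlam0 : lam = 0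
  · subst hlam0
    simp only [mul_zero, div_zero] at hT
    subst hT
    have hr'r : r' = r := by
      funext k; rw [hrec]; simp
    subst hr'r
    simp only [hω, hω']
    simp
  -- main case
  have hρ : (ρ : ℂ) ≠ 0 := by exact_mod_cast h1.ne'
  set c : ℂ := ρ * lam with hc
  have hcne : c ≠ 0 := mul_ne_zero hρ hlam0
  have hTc : c * T = 1 - lam := by
    rw [hT]; field_simp
  have hr'k : ∀ k, r' k = c * (T - ζ k) * r k := by
    intro k
    rw [hrec]
    simp only
    linear_combination (-(r k)) * hTc
  have hconjζ : ∀ k, (starRingEnd ℂ) (ζ k) * ζ k = 1 := by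
    intro k
    rw [mul_comm, Complex.mul_conj, Complex.normSq_eq_norm_sq, hζ]
    norm_num
  set S : ℕ → ℂ := fun j => ∑ k, ζ k ^ j * r k * (starRingEnd ℂ) (r k) with hS
  set cc : ℂ := c * (starRingEnd ℂ) c with hcc
  have hccne : cc ≠ 0 := mul_ne_zero hcne (by simpa using hcne)
  set tt : ℂ := 1 + T * (starRingEnd ℂ) T with htt
  have lin : ∀ (a b e : ℂ) (f g h' : Fin d → ℂ),
      (∑ k, (a * f k - b * g k - e * h' k))
        = a * (∑ k, f k) - b * (∑ k, g k) - e * (∑ k, h' k) := by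
    intro a b e f g h'
    simp [Finset.sum_sub_distrib, Finset.mul_sum]
  -- numerator identity
  have key : ∀ jj : ℕ, (∑ k, ζ k ^ (jj + 1) * r' k * (starRingEnd ℂ) (r' k))
      = cc * (tt * S (jj + 1) - T * S jj - (starRingEnd ℂ) T * S (jj + 2)) := by
    intro jj
    have hpt : ∀ k : Fin d, ζ k ^ (jj + 1) * r' k * (starRingEnd ℂ) (r' k)
        = (cc * tt) * (ζ k ^ (jj + 1) * r k * (starRingEnd ℂ) (r k))
            - (cc * T) * (ζ k ^ jj * r k * (starRingEnd ℂ) (r k))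
            - (cc * (starRingEnd ℂ) T) * (ζ k ^ (jj + 2) * r k * (starRingEnd ℂ) (r k)) := by
      intro k
      rw [hr'k k]
      simp only [map_mul, map_sub, hcc, htt]
      linear_combination (c * (starRingEnd ℂ) c * (r k * (starRingEnd ℂ) (r k)) *
        (ζ k ^ (jj + 1) - T * ζ k ^ jj)) * hconjζ k
    rw [Finset.sum_congr rfl fun k _ => hpt k, lin]
    simp only [hS]
    ring
  -- denominator identity
  have hconjS1 : (∑ k, (starRingEnd ℂ) (ζ k) * r k * (starRingEnd ℂ) (r k))
      = (starRingEnd ℂ) (S 1) := by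
    rw [hS]
    simp only [map_sum, map_mul, pow_one, Complex.conj_conj]
    apply Finset.sum_congr rfl
    intro k _; ring
  set Y : ℂ := tt * S 0 - T * (starRingEnd ℂ) (S 1) - (starRingEnd ℂ) T * S 1 with hY
  have hden : (∑ k, r' k * (starRingEnd ℂ) (r' k)) = cc * Y := by
    have hpt : ∀ k : Fin d, r' k * (starRingEnd ℂ) (r' k)
        = (cc * tt) * (ζ k ^ 0 * r k * (starRingEnd ℂ) (r k))
            - (cc * T) * ((starRingEnd ℂ) (ζ k) * r k * (starRingEnd ℂ) (r k))
            - (cc * (starRingEnd ℂ) T) * (ζ k ^ 1 * r k * (starRingEnd ℂ) (r k)) := by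
      intro k
      rw [hr'k k]
      simp only [map_mul, map_sub, hcc, htt, pow_zero, pow_one, one_mul]
      linear_combination (c * (starRingEnd ℂ) c * (r k * (starRingEnd ℂ) (r k))) * hconjζ k
    rw [Finset.sum_congr rfl fun k _ => hpt k, lin, hconjS1]
    simp only [hS, hY]
    ring
  -- real sums as complex
  have hcast : ∀ v : Fin d → ℂ, ((∑ k, ‖v k‖ ^ 2 : ℝ) : ℂ)
      = ∑ k, v k * (starRingEnd ℂ) (v k) := by
    intro v
    rw [Complex.ofReal_sum]
    apply Finset.sum_congr rfl
    intro k _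
    rw [Complex.sq_norm, Complex.mul_conj]
  have hNr : ((∑ k, ‖r k‖ ^ 2 : ℝ) : ℂ) = S 0 := by
    rw [hcast, hS]; simp
  have hNr' : ((∑ k, ‖r' k‖ ^ 2 : ℝ) : ℂ) = cc * Y := by
    rw [hcast, hden]
  -- nonvanishing
  have hS0ne : S 0 ≠ 0 := by
    rw [← hNr]
    obtain ⟨k0, hk0⟩ := Function.ne_iff.mp hr
    have hpos : (0 : ℝ) < ∑ k, ‖r k‖ ^ 2 :=
      Finset.sum_pos' (fun k _ => by positivity)
        ⟨k0, Finset.mem_univ k0, by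
          have hk : ‖r k0‖ > 0 := norm_pos_iff.mpr (by simpa using hk0)
          positivity⟩
    exact_mod_cast hpos.ne'
  have hYne : Y ≠ 0 := by
    intro h0
    obtain ⟨k0, hk0⟩ := Function.ne_iff.mp hr'ne
    have hpos : (0 : ℝ) < ∑ k, ‖r' k‖ ^ 2 :=
      Finset.sum_pos' (fun k _ => by positivity)
        ⟨k0, Finset.mem_univ k0, by
          have hk : ‖r' k0‖ > 0 := norm_pos_iff.mpr (by simpa using hk0)
          positivity⟩
    have h00 : ((∑ k, ‖r' k‖ ^ 2 : ℝ) : ℂ) = 0 := by rw [hNr', h0, mul_zero]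
    exact hpos.ne' (by exact_mod_cast h00)
  -- coercion of |T|^2
  have hTT : ((‖T‖ ^ 2 : ℝ) : ℂ) = T * (starRingEnd ℂ) T := by
    rw [Complex.mul_conj, Complex.sq_norm]
  have h1T : ((1 + ‖T‖ ^ 2 : ℝ) : ℂ) = tt := by
    rw [Complex.ofReal_add, Complex.ofReal_one, hTT, htt]
  -- denominator of RHS
  have hDen : ((1 + ‖T‖ ^ 2 - 2 * ((starRingEnd ℂ) T * ω 1).re : ℝ) : ℂ)
      = Y / S 0 := by
    have h2re : ((2 * ((starRingEnd ℂ) T * ω 1).re : ℝ) : ℂ)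
        = (starRingEnd ℂ) T * ω 1 + (starRingEnd ℂ) ((starRingEnd ℂ) T * ω 1) := by
      rw [Complex.add_conj]
    have hω1 : ω 1 = S 1 / S 0 := by rw [hω 1, hNr]
    have hconjω1 : (starRingEnd ℂ) (ω 1) = (starRingEnd ℂ) (S 1) / S 0 := by
      rw [hω1, map_div₀]
      congr 1
      rw [← hNr, Complex.conj_ofReal, hNr]
    rw [Complex.ofReal_sub, h2re, Complex.ofReal_add, Complex.ofReal_one, hTT,
      map_mul, Complex.conj_conj, hconjω1, hω1, hY, htt]
    field_simp
    ring
  -- finish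
  have hωS : ∀ jj, ω jj = S jj / S 0 := fun jj => by rw [hω jj, hNr]
  rw [hω' (m + 1), hNr', key m, mul_div_mul_left _ _ hccne, hDen]
  simp only [Nat.add_sub_cancel]
  rw [hωS (m + 1), hωS m, hωS (m + 1 + 1), h1T]
  have hnum : tt * (S (m + 1) / S 0) - T * (S m / S 0)
      - (starRingEnd ℂ) T * (S (m + 1 + 1) / S 0)
      = (tt * S (m + 1) - T * S m - (starRingEnd ℂ) T * S (m + 2)) / S 0 := by
    field_simp
  rw [hnum, div_div_div_cancel_right₀ hS0ne]
end

section
/- Let Φ_n(X,q) = ∏_{k=1}^n (X − q^{2k−1}) = Σ_{i=0}^n a_i Xⁱ with coefficients a_i = a_i(q). Then (Σ_{i=0}^{n−1} a_i a_{i+1}) / (Σ_{i=0}^n a_i²) = −q(1 − q^{2n})/(1 − q^{2n+2}), for all q such that the denominators are nonzero; equivalently, (1 − q^{2n+2})·Σ_{i=0}^{n−1} a_i a_{i+1} = −q(1 − q^{2n})·Σ_{i=0}^n a_i² as polynomial identities in q. -/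
open Finset Polynomial

lemma aux_coeff_comp (p : ℂ[X]) (a : ℂ) (m : ℕ) :
    (p.comp (C a * X)).coeff m = a ^ m * p.coeff m := by
  induction p using Polynomial.induction_on' with
  | add p r hp hr => simp [add_comp, hp, hr, mul_add]
  | monomial i c =>
    simp only [monomial_comp, mul_pow, ← C_pow, ← mul_assoc, ← C_mul, coeff_monomial,
      coeff_C_mul, coeff_X_pow]
    split_ifs with h1 h2 h2 <;> simp_all; ring

lemma aux_rev_lin (c : ℂ) : (X - C c).reverse = 1 - C c * X := by
  rw [reverse, natDegree_X_sub_C,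
    show (X - C c : ℂ[X]) = X ^ 1 - C c * X ^ 0 by ring, reflect_sub, reflect_monomial,
    reflect_C_mul_X_pow]
  rw [revAt_le (le_refl 1), revAt_le (Nat.zero_le 1)]; simp

lemma aux_rev_prod (q : ℂ) (n : ℕ) :
    (∏ k ∈ Finset.range n, (X - C (q ^ (2 * k + 1)))).reverse =
      ∏ k ∈ Finset.range n, (1 - C (q ^ (2 * k + 1)) * X) := by
  induction n with
  | zero => simpa using reverse_C (1 : ℂ)
  | succ m ih =>
    rw [prod_range_succ, prod_range_succ, reverse_mul_of_domain, ih, aux_rev_lin]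

lemma aux_natDegree (q : ℂ) (n : ℕ) :
    (∏ k ∈ Finset.range n, (X - C (q ^ (2 * k + 1)))).natDegree = n := by
  rw [natDegree_prod_of_monic]
  · rw [Finset.sum_congr rfl (fun k _ => natDegree_X_sub_C (q ^ (2 * k + 1)))]
    simp
  · intro k _; exact monic_X_sub_C _

/-- Lemma 4.11 (MacMahon-type identity): with Φ_n(X,q) = ∏_{k=1}^n (X − q^{2k−1})
= Σ_{i=0}^n a_i Xⁱ, one has
(1 − q^{2n+2})·Σ_{i=0}^{n−1} a_i a_{i+1} = −q(1 − q^{2n})·Σ_{i=0}^n a_i². -/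
theorem stmt14 (n : ℕ) (hn : 1 ≤ n) (q : ℂ) :
    (1 - q ^ (2 * n + 2)) *
        ∑ i ∈ Finset.range n,
          (∏ k ∈ Finset.range n, (X - C (q ^ (2 * k + 1)))).coeff i *
            (∏ k ∈ Finset.range n, (X - C (q ^ (2 * k + 1)))).coeff (i + 1) =
      -q * (1 - q ^ (2 * n)) *
        ∑ i ∈ Finset.range (n + 1),
          ((∏ k ∈ Finset.range n, (X - C (q ^ (2 * k + 1)))).coeff i) ^ 2 := by
  rcases eq_or_ne q 0 with rfl | hq
  · have hz : ∀ k : ℕ, (0 : ℂ) ^ (2 * k + 1) = 0 := fun k => zero_pow (by omega)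
    simp only [hz, map_zero, sub_zero, Finset.prod_const, Finset.card_range]
    have h1 : ∑ i ∈ Finset.range n, ((X : ℂ[X]) ^ n).coeff i * ((X : ℂ[X]) ^ n).coeff (i + 1)
        = 0 := by
      apply Finset.sum_eq_zero
      intro i hi
      rw [coeff_X_pow, if_neg (by simp at hi; omega), zero_mul]
    rw [h1, mul_zero, zero_pow (by omega), neg_zero, zero_mul, zero_mul]
  obtain ⟨m, rfl⟩ : ∃ m, n = m + 1 := ⟨n - 1, by omega⟩
  clear hn
  set A : ℂ[X] := ∏ k ∈ Finset.range (m + 1), (X - C (q ^ (2 * k + 1))) with hAdef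
  have hA : A.natDegree = m + 1 := aux_natDegree q (m + 1)
  have hAtop : A.coeff (m + 2) = 0 := coeff_eq_zero_of_natDegree_lt (by omega)
  have hBc : ∀ j, j ≤ m + 1 → A.reverse.coeff j = A.coeff (m + 1 - j) := by
    intro j hj
    rw [coeff_reverse, hA, revAt_le hj]
  have hB0 : A.reverse.coeff (m + 2) = 0 :=
    coeff_eq_zero_of_natDegree_lt (lt_of_le_of_lt A.reverse_natDegree_le (by omega))
  set P : ℂ[X] := A * A.reverse with hPdef
  have hcn : P.coeff (m + 1) = ∑ i ∈ Finset.range (m + 2), (A.coeff i) ^ 2 := by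
    rw [hPdef, coeff_mul, Finset.Nat.sum_antidiagonal_eq_sum_range_succ_mk]
    apply Finset.sum_congr rfl
    intro i hi
    simp only [Finset.mem_range] at hi
    rw [hBc _ (Nat.sub_le _ _), Nat.sub_sub_self (by omega : i ≤ m + 1), sq]
  have hcn1 : P.coeff (m + 2) = ∑ i ∈ Finset.range (m + 1), A.coeff i * A.coeff (i + 1) := by
    rw [hPdef, coeff_mul, Finset.Nat.sum_antidiagonal_eq_sum_range_succ_mk,
      Finset.sum_range_succ']
    rw [show m + 2 - 0 = m + 2 from rfl, hB0, mul_zero, add_zero, Finset.sum_range_succ,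
      show m + 2 - (m + 1 + 1) = 0 by omega, hAtop, zero_mul, add_zero]
    apply Finset.sum_congr rfl
    intro i hi
    simp only [Finset.mem_range] at hi
    rw [show m + 2 - (i + 1) = m + 1 - i by omega, hBc _ (by omega),
      Nat.sub_sub_self (by omega : i ≤ m + 1)]
    ring
  -- product identity ingredients
  set Pm : ℂ[X] := ∏ k ∈ Finset.range m, (X - C (q ^ (2 * k + 1))) with hPm
  set B : ℂ[X] := ∏ k ∈ Finset.range (m + 1), (1 - C (q ^ (2 * k + 1)) * X) with hB
  set B' : ℂ[X] := ∏ k ∈ Finset.range (m + 1), (1 - C (q ^ (2 * k + 3)) * X) with hB'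
  have hrev : A.reverse = B := aux_rev_prod q (m + 1)
  have e3 : A = Pm * (X - C (q ^ (2 * m + 1))) := Finset.prod_range_succ _ m
  have e1 : ∏ k ∈ Finset.range (m + 1), (C (q ^ 2) * X - C (q ^ (2 * k + 1)))
      = -(C q ^ (2 * m + 1) * ((1 - C q * X) * Pm)) := by
    rw [Finset.prod_range_succ']
    rw [Finset.prod_congr rfl (fun k _ => show C (q ^ 2) * X - C (q ^ (2 * (k + 1) + 1))
        = C (q ^ 2) * (X - C (q ^ (2 * k + 1))) by
      rw [mul_sub, ← C_mul, ← pow_add]; norm_num; ring_nf)]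
    rw [Finset.prod_mul_distrib, Finset.prod_const, Finset.card_range, ← hPm]
    simp only [C_pow]
    rw [show 2 * 0 + 1 = 1 by rfl, pow_one]
    ring
  have e2 : B' * (1 - C q * X) = B * (1 - C (q ^ (2 * m + 3)) * X) := by
    have h1 := Finset.prod_range_succ' (fun k => (1 - C (q ^ (2 * k + 1)) * X)) (m + 1)
    have h2 := Finset.prod_range_succ (fun k => (1 - C (q ^ (2 * k + 1)) * X)) (m + 1)
    rw [show (2 : ℕ) * 0 + 1 = 1 by rfl, pow_one] at h1
    rw [show 2 * (m + 1) + 1 = 2 * m + 3 by ring] at h2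
    rw [hB', Finset.prod_congr rfl (fun k _ => show (1 - C (q ^ (2 * k + 3)) * X : ℂ[X])
        = 1 - C (q ^ (2 * (k + 1) + 1)) * X by norm_num; ring_nf)]
    rw [← h1.symm.trans h2]
  have ecomp : P.comp (C (q ^ 2) * X)
      = (∏ k ∈ Finset.range (m + 1), (C (q ^ 2) * X - C (q ^ (2 * k + 1)))) * B' := by
    rw [hPdef, hrev, mul_comp, hAdef, hB, Polynomial.prod_comp, Polynomial.prod_comp]
    congr 1
    · exact Finset.prod_congr rfl fun k _ => by simp
    · rw [hB']
      apply Finset.prod_congr rfl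
      intro k _
      simp only [sub_comp, one_comp, mul_comp, C_comp, X_comp]
      rw [show (q ^ (2 * k + 3)) = q ^ (2 * k + 1) * q ^ 2 by rw [← pow_add], map_mul]
      ring
  have hkey : C q * ((X - C (q ^ (2 * m + 1))) * (P.comp (C (q ^ 2) * X)))
      = -(C (q ^ (2 * m + 2)) * ((1 - C (q ^ (2 * m + 3)) * X) * P)) := by
    rw [ecomp, e1]
    conv_rhs => rw [hPdef, hrev, e3]
    simp only [C_pow] at e2 ⊢
    linear_combination (-(C q ^ (2 * m + 2)) * Pm * (X - C q ^ (2 * m + 1))) * e2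
  have hs := congrArg (fun p : ℂ[X] => p.coeff (m + 1 + 1)) hkey
  simp only [coeff_C_mul, coeff_neg, coeff_sub, sub_mul, one_mul, mul_assoc, coeff_X_mul,
    aux_coeff_comp] at hs
  rw [show 2 * (m + 1) + 2 = 2 * m + 4 by ring, show 2 * (m + 1) = 2 * m + 2 by ring,
    ← hcn1, ← hcn]
  apply mul_left_cancel₀ (pow_ne_zero (2 * m + 2) hq)
  linear_combination hs
end

section
/- Define on the unit circle S¹ with Haar probability measure dμ₀ the sequences ω_n = (∫ z dμ_n)/(∫ dμ_n), T_n = (ω_n + ρ)/(ρ·conj(ω_n) + 1), dμ_{n+1}(z) = |z − T_n|² dμ_n(z), starting from dμ₀, where 0 < ρ < 1. Then T_n = ρ^{2n+1} for all n ≥ 0; in particular T_n → 0. -/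
open scoped Real
open Filter

/-- q-binomial-like coefficients via q-Pascal recursion. -/
noncomputable def gbF (Q : ℝ) : ℕ → ℤ → ℝ
  | 0, m => if m = 0 then 1 else 0
  | (N+1), m => gbF Q N m + Q ^ ((N : ℤ) + 1 - m) * gbF Q N (m - 1)

lemma gbF_neg (Q : ℝ) : ∀ (N : ℕ) (m : ℤ), m < 0 → gbF Q N m = 0 := by
  intro N
  induction N with
  | zero => intro m hm; simp [gbF]; omega
  | succ N ih =>
      intro m hm
      simp [gbF, ih m hm, ih (m-1) (by omega)]

lemma gbF_gt (Q : ℝ) : ∀ (N : ℕ) (m : ℤ), (N : ℤ) < m → gbF Q N m = 0 := by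
  intro N
  induction N with
  | zero => intro m hm; simp [gbF]; omega
  | succ N ih =>
      intro m hm
      have h1 : (N : ℤ) < m := by push_cast at hm ⊢; omega
      have h2 : (N : ℤ) < m - 1 := by push_cast at hm ⊢; omega
      simp [gbF, ih m h1, ih (m-1) h2]

lemma gbF_nonneg (Q : ℝ) (hQ : 0 < Q) : ∀ (N : ℕ) (m : ℤ), 0 ≤ gbF Q N m := by
  intro N
  induction N with
  | zero => intro m; simp [gbF]; split <;> norm_num
  | succ N ih =>
      intro m
      exact add_nonneg (ih m)
        (mul_nonneg (le_of_lt (zpow_pos hQ _)) (ih (m-1)))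

lemma gbF_pos (Q : ℝ) (hQ : 0 < Q) : ∀ (N : ℕ) (m : ℤ), 0 ≤ m → m ≤ (N : ℤ) → 0 < gbF Q N m := by
  intro N
  induction N with
  | zero => intro m h1 h2; have : m = 0 := by omega
            simp [gbF, this]
  | succ N ih =>
      intro m h1 h2
      simp only [gbF]
      rcases lt_or_ge (m : ℤ) ((N:ℤ)+1) with h | h
      · have h3 := ih m h1 (by omega)
        have h4 := gbF_nonneg Q hQ N (m-1)
        have h5 := zpow_pos hQ ((N : ℤ) + 1 - m)
        nlinarith
      · have hm : m = (N : ℤ) + 1 := by omega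
        have h3 := ih (m-1) (by omega) (by omega)
        have h4 := gbF_gt Q N m (by omega)
        have h5 := zpow_pos hQ ((N : ℤ) + 1 - m)
        rw [h4]
        nlinarith

/-- The second q-Pascal identity. -/
lemma gbF_B (Q : ℝ) (hQ : Q ≠ 0) : ∀ (N : ℕ) (m : ℤ),
    gbF Q (N+1) m = Q ^ m * gbF Q N m + gbF Q N (m-1) := by
  intro N
  induction N with
  | zero =>
      intro m
      simp only [gbF]
      rcases eq_or_ne m 0 with h | h
      · simp [h]
      rcases eq_or_ne m 1 with h1 | h1
      · have h2 : m - 1 = 0 := by omega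
        simp [h, h1, h2]
      · have h2 : m - 1 ≠ 0 := by omega
        simp [h, h1, h2]
  | succ N ih =>
      intro m
      set a := gbF Q N m with ha
      set b := gbF Q N (m-1) with hb
      set c := gbF Q N (m-2) with hc
      have hm2 : m - 1 - 1 = m - 2 := by ring
      have hA1 : gbF Q (N+1) m = a + Q ^ ((N:ℤ)+1-m) * b := rfl
      have hA2 : gbF Q (N+1) (m-1) = b + Q ^ ((N:ℤ)+1-(m-1)) * c := by
        show gbF Q N (m-1) + Q ^ ((N:ℤ)+1-(m-1)) * gbF Q N (m-1-1) = _
        rw [hm2]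
      have hB1 : gbF Q (N+1) m = Q^m * a + b := ih m
      have hB2 : gbF Q (N+1) (m-1) = Q^(m-1) * b + c := by rw [ih (m-1), hm2]
      have k2 : (((N+1:ℕ)):ℤ)+1-m = ((N:ℤ)+1-(m-1)) := by push_cast; ring
      have k1 : Q ^ ((N:ℤ)+1-(m-1)) * Q^(m-1) = Q^m * Q^((N:ℤ)+1-m) := by
        rw [← zpow_add₀ hQ, ← zpow_add₀ hQ]; congr 1; ring
      calc gbF Q (N+1+1) m
          = gbF Q (N+1) m + Q ^ (((N+1:ℕ):ℤ)+1-m) * gbF Q (N+1) (m-1) := rfl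
        _ = (Q^m * a + b) + Q ^ ((N:ℤ)+1-(m-1)) * (Q^(m-1) * b + c) := by
            rw [hB1, hB2, k2]
        _ = Q^m * (a + Q^((N:ℤ)+1-m) * b) + (b + Q^((N:ℤ)+1-(m-1)) * c) := by
            linear_combination b * k1
        _ = Q^m * gbF Q (N+1) m + gbF Q (N+1) (m-1) := by rw [hA1, hA2]

/-- The ratio identity between adjacent q-binomials. -/
lemma gbF_ratio (Q : ℝ) (hQ : Q ≠ 0) : ∀ (N : ℕ) (m : ℤ),
    (1 - Q ^ (m+1)) * gbF Q N (m+1) = (1 - Q ^ ((N:ℤ) - m)) * gbF Q N m := by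
  intro N
  induction N with
  | zero =>
      intro m
      rcases eq_or_ne m 0 with h | h
      · simp [gbF, h]
      rcases eq_or_ne m (-1) with h1 | h1
      · simp [gbF, h1]
      · have h2 : m + 1 ≠ 0 := by omega
        simp [gbF, h, h2]
  | succ N ih =>
      intro m
      have d1 : gbF Q (N+1) (m+1) = gbF Q N (m+1) + Q ^ ((N:ℤ)+1-(m+1)) * gbF Q N m := by
        show gbF Q N (m+1) + Q ^ ((N:ℤ)+1-(m+1)) * gbF Q N (m+1-1) = _
        norm_num
      have d2 : gbF Q (N+1) m = gbF Q N m + Q ^ ((N:ℤ)+1-m) * gbF Q N (m-1) := rfl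
      have i1 := ih m
      have i2 := ih (m-1)
      -- rewrite i2 : (1 - Q^m) * gbF Q N m = (1 - Q^(N-(m-1))) * gbF Q N (m-1)
      have i2' : (1 - Q^m) * gbF Q N m = (1 - Q^((N:ℤ)+1-m)) * gbF Q N (m-1) := by
        have : m - 1 + 1 = m := by ring
        have : (1 - Q ^ (m-1+1)) * gbF Q N (m-1+1) = (1 - Q ^ ((N:ℤ) - (m-1))) * gbF Q N (m-1) := i2
        simpa [show m - 1 + 1 = m by ring, show (N:ℤ) - (m-1) = (N:ℤ)+1-m by ring] using this
      rw [d1, d2]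
      have z1 : Q ^ ((N:ℤ)+1-(m+1)) * Q^(m+1) = Q^((N:ℤ)+1) := by
        rw [← zpow_add₀ hQ]; congr 1; ring
      have z2 : Q ^ ((N:ℤ)+1-m) * Q^m = Q^((N:ℤ)+1) := by
        rw [← zpow_add₀ hQ]; congr 1; ring
      have z4 : Q ^ ((N:ℤ)+1-(m+1)) = Q ^ ((N:ℤ)-m) := by congr 1; ring
      have z5 : Q ^ (((N+1:ℕ):ℤ) - m) = Q ^ ((N:ℤ)+1-m) := by norm_num
      linear_combination i1 + Q ^ ((N:ℤ)+1-m) * i2' + gbF Q N m * z4 - gbF Q N m * z1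
        + gbF Q N m * z2 + (gbF Q N m + Q ^ ((N:ℤ)+1-m) * gbF Q N (m-1)) * z5

/-- Coefficients of ∏_{k<n} (X - ρ^{2k+1})(1 - ρ^{2k+1} X). -/
noncomputable def rrF (ρ : ℝ) (n : ℕ) (m : ℤ) : ℝ :=
  (-1 : ℝ) ^ ((n : ℤ) + m) * ρ ^ (((n : ℤ) - m)^2) * gbF (ρ^2) (2*n) m

lemma rrF_neg (ρ : ℝ) (n : ℕ) (m : ℤ) (hm : m < 0) : rrF ρ n m = 0 := by
  simp [rrF, gbF_neg _ _ _ hm]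

lemma rrF_gt (ρ : ℝ) (n : ℕ) (m : ℤ) (hm : (2*n : ℤ) < m) : rrF ρ n m = 0 := by
  have : ((2*n : ℕ) : ℤ) < m := by push_cast; omega
  simp [rrF, gbF_gt _ _ _ this]

lemma hQz (ρ : ℝ) (hρ : ρ ≠ 0) (e : ℤ) : ((ρ^2 : ℝ)) ^ e = ρ ^ (2*e) := by
  rw [← zpow_natCast ρ 2, ← zpow_mul]
  norm_num

/-- The `star` identity: two q-Pascal steps. -/
lemma gbF_star (Q : ℝ) (hQ : Q ≠ 0) (n : ℕ) (m : ℤ) :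
    gbF Q (2*n+2) m = Q^m * gbF Q (2*n) m + (1 + Q^(2*(n:ℤ)+1)) * gbF Q (2*n) (m-1)
      + Q^(2*(n:ℤ)+2-m) * gbF Q (2*n) (m-2) := by
  have hB := gbF_B Q hQ (2*n+1) m
  have dA1 : gbF Q (2*n+1) m = gbF Q (2*n) m + Q ^ ((↑(2*n):ℤ)+1-m) * gbF Q (2*n) (m-1) := rfl
  have dA2 : gbF Q (2*n+1) (m-1)
      = gbF Q (2*n) (m-1) + Q ^ ((↑(2*n):ℤ)+1-(m-1)) * gbF Q (2*n) (m-1-1) := rfl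
  have hm2 : m - 1 - 1 = m - 2 := by ring
  rw [hm2] at dA2
  have z1 : Q^m * Q ^ ((↑(2*n):ℤ)+1-m) = Q^(2*(n:ℤ)+1) := by
    rw [← zpow_add₀ hQ]; congr 1; push_cast; ring
  have z2 : Q ^ ((↑(2*n):ℤ)+1-(m-1)) = Q^(2*(n:ℤ)+2-m) := by
    congr 1; push_cast; ring
  calc gbF Q (2*n+2) m = gbF Q ((2*n+1)+1) m := by norm_num
    _ = Q ^ m * gbF Q (2*n+1) m + gbF Q (2*n+1) (m-1) := hB
    _ = _ := by rw [dA1, dA2]; linear_combination gbF Q (2*n) (m-1) * z1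
                  + gbF Q (2*n) (m-2) * z2

lemma rrF_rec (ρ : ℝ) (hρ : ρ ≠ 0) (n : ℕ) (m : ℤ) :
    rrF ρ (n+1) m = -ρ^(2*(n:ℤ)+1) * rrF ρ n m + (1 + ρ^(4*(n:ℤ)+2)) * rrF ρ n (m-1)
      - ρ^(2*(n:ℤ)+1) * rrF ρ n (m-2) := by
  have hQ : (ρ^2 : ℝ) ≠ 0 := pow_ne_zero 2 hρ
  have h1 : (-1:ℝ) ≠ 0 := by norm_num
  have e2 : (2*(n+1) : ℕ) = 2*n+2 := by ring
  have star := gbF_star (ρ^2) hQ n m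
  have hs1 : (-1 : ℝ) ^ ((↑(n+1):ℤ) + m) = -((-1:ℝ) ^ ((n:ℤ) + m)) := by
    have : ((↑(n+1):ℤ) + m) = ((n:ℤ) + m) + 1 := by push_cast; ring
    rw [this, zpow_add₀ h1]; norm_num
  have hs2 : (-1 : ℝ) ^ ((n:ℤ) + (m-1)) = -((-1:ℝ) ^ ((n:ℤ) + m)) := by
    have : ((n:ℤ) + (m-1)) = ((n:ℤ) + m) + (-1) := by ring
    rw [this, zpow_add₀ h1]; norm_num
  have hs3 : (-1 : ℝ) ^ ((n:ℤ) + (m-2)) = (-1:ℝ) ^ ((n:ℤ) + m) := by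
    have : ((n:ℤ) + (m-2)) = ((n:ℤ) + m) + (-2) := by ring
    rw [this, zpow_add₀ h1]; norm_num
  have pa : ρ ^ (((↑(n+1):ℤ) - m)^2) * (ρ^2) ^ m = ρ^(2*(n:ℤ)+1) * ρ ^ (((n:ℤ) - m)^2) := by
    rw [hQz ρ hρ, ← zpow_add₀ hρ, ← zpow_add₀ hρ]; congr 1; push_cast; ring
  have pb : ρ ^ (((↑(n+1):ℤ) - m)^2) = ρ ^ (((n:ℤ) - (m-1))^2) := by
    congr 1; push_cast; ring
  have pq : ((ρ^2:ℝ)) ^ (2*(n:ℤ)+1) = ρ ^ (4*(n:ℤ)+2) := by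
    rw [hQz ρ hρ]; congr 1; ring
  have pc : ρ ^ (((↑(n+1):ℤ) - m)^2) * (ρ^2) ^ (2*(n:ℤ)+2-m)
      = ρ^(2*(n:ℤ)+1) * ρ ^ (((n:ℤ) - (m-2))^2) := by
    rw [hQz ρ hρ, ← zpow_add₀ hρ, ← zpow_add₀ hρ]; congr 1; push_cast; ring
  simp only [rrF, e2]
  rw [star, hs1, hs2, hs3]
  set s := (-1:ℝ) ^ ((n:ℤ) + m)
  set g0 := gbF (ρ^2) (2*n) m
  set g1 := gbF (ρ^2) (2*n) (m-1)
  set g2 := gbF (ρ^2) (2*n) (m-2)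
  linear_combination (-s * g0) * pa + (-s * g1 * (1 + (ρ^2:ℝ) ^ (2*(n:ℤ)+1))) * pb
    + (-s * g1 * ρ ^ (((n:ℤ) - (m-1))^2)) * pq + (-s * g2) * pc

lemma shift_sum (f : ℤ → ℝ) (d b c : ℤ) (hc : 0 ≤ c) (hb : d + c ≤ b)
    (h0 : ∀ m, m < 0 → f m = 0) (h2 : ∀ m, d < m → f m = 0) (z : ℂ) (hz : z ≠ 0) :
    ∑ m ∈ Finset.Icc (0:ℤ) b, (f (m - c) : ℂ) * z ^ m
      = z ^ c * ∑ m ∈ Finset.Icc (0:ℤ) d, (f m : ℂ) * z ^ m := by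
  have hsub : Finset.Icc c (d+c) ⊆ Finset.Icc (0:ℤ) b := Finset.Icc_subset_Icc hc hb
  rw [← Finset.sum_subset hsub ?vanish]
  case vanish =>
    intro x hx hx'
    simp only [Finset.mem_Icc] at hx hx'
    rcases lt_or_ge x c with h | h
    · rw [h0 (x - c) (by omega)]; simp
    · rw [h2 (x - c) (by omega)]; simp
  rw [show Finset.Icc c (d+c) = (Finset.Icc (0:ℤ) d).map (addRightEmbedding c) by
    rw [Finset.map_add_right_Icc, zero_add]]
  rw [Finset.sum_map, Finset.mul_sum]
  apply Finset.sum_congr rfl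
  intro j hj
  simp only [addRightEmbedding_apply, add_sub_cancel_right]
  rw [zpow_add₀ hz]
  ring

lemma prod_expand (ρ : ℝ) (hρ : ρ ≠ 0) (n : ℕ) (z : ℂ) (hz : z ≠ 0) :
    ∏ k ∈ Finset.range n, ((z - (ρ:ℂ)^(2*k+1)) * (1 - (ρ:ℂ)^(2*k+1) * z))
      = ∑ m ∈ Finset.Icc (0:ℤ) (2*(n:ℤ)), ((rrF ρ n m : ℝ) : ℂ) * z ^ m := by
  induction n with
  | zero => simp [rrF, gbF]
  | succ n ih =>
      have hb : (2*((↑(n+1)):ℤ)) = 2*(n:ℤ) + 2 := by push_cast; ring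
      have hT : ((ρ : ℂ)) ^ (2*(n:ℤ)+1) = (ρ:ℂ) ^ (2*n+1 : ℕ) := by
        rw [show (2*(n:ℤ)+1) = ((2*n+1 : ℕ) : ℤ) by push_cast; ring, zpow_natCast]
      have hzρ : (ρ:ℂ) ≠ 0 := Complex.ofReal_ne_zero.mpr hρ
      have hT2 : ((ρ : ℂ)) ^ (4*(n:ℤ)+2) = ((ρ:ℂ) ^ (2*n+1 : ℕ))^2 := by
        rw [← hT, sq, ← zpow_add₀ hzρ]; congr 1; ring
      have hrec : ∀ m : ℤ, ((rrF ρ (n+1) m : ℝ) : ℂ)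
          = -(ρ:ℂ)^(2*(n:ℤ)+1) * (rrF ρ n m : ℝ)
            + (1 + (ρ:ℂ)^(4*(n:ℤ)+2)) * (rrF ρ n (m-1) : ℝ)
            - (ρ:ℂ)^(2*(n:ℤ)+1) * (rrF ρ n (m-2) : ℝ) := by
        intro m
        rw [rrF_rec ρ hρ n m]
        push_cast [Complex.ofReal_zpow]
        ring
      have h0 := fun m hm => rrF_neg ρ n m hm
      have h2 := fun m hm => rrF_gt ρ n m hm
      have S0 : ∑ m ∈ Finset.Icc (0:ℤ) (2*(n:ℤ)+2), ((rrF ρ n (m - 0) : ℝ) : ℂ) * z ^ m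
          = z ^ (0:ℤ) * ∑ m ∈ Finset.Icc (0:ℤ) (2*(n:ℤ)), ((rrF ρ n m : ℝ) : ℂ) * z ^ m :=
        shift_sum _ _ _ _ (by norm_num) (by omega) h0 h2 z hz
      have S1 : ∑ m ∈ Finset.Icc (0:ℤ) (2*(n:ℤ)+2), ((rrF ρ n (m - 1) : ℝ) : ℂ) * z ^ m
          = z ^ (1:ℤ) * ∑ m ∈ Finset.Icc (0:ℤ) (2*(n:ℤ)), ((rrF ρ n m : ℝ) : ℂ) * z ^ m :=
        shift_sum _ _ _ _ (by norm_num) (by omega) h0 h2 z hz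
      have S2 : ∑ m ∈ Finset.Icc (0:ℤ) (2*(n:ℤ)+2), ((rrF ρ n (m - 2) : ℝ) : ℂ) * z ^ m
          = z ^ (2:ℤ) * ∑ m ∈ Finset.Icc (0:ℤ) (2*(n:ℤ)), ((rrF ρ n m : ℝ) : ℂ) * z ^ m :=
        shift_sum _ _ _ _ (by norm_num) (by omega) h0 h2 z hz
      rw [Finset.prod_range_succ, ih, hb]
      have expand : ∑ m ∈ Finset.Icc (0:ℤ) (2*(n:ℤ)+2), ((rrF ρ (n+1) m : ℝ) : ℂ) * z ^ m
          = -(ρ:ℂ)^(2*(n:ℤ)+1)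
              * ∑ m ∈ Finset.Icc (0:ℤ) (2*(n:ℤ)+2), ((rrF ρ n (m - 0) : ℝ) : ℂ) * z ^ m
            + (1 + (ρ:ℂ)^(4*(n:ℤ)+2))
              * ∑ m ∈ Finset.Icc (0:ℤ) (2*(n:ℤ)+2), ((rrF ρ n (m - 1) : ℝ) : ℂ) * z ^ m
            - (ρ:ℂ)^(2*(n:ℤ)+1)
              * ∑ m ∈ Finset.Icc (0:ℤ) (2*(n:ℤ)+2), ((rrF ρ n (m - 2) : ℝ) : ℂ) * z ^ m := by
        have hcg : ∀ m ∈ Finset.Icc (0:ℤ) (2*(n:ℤ)+2),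
            ((rrF ρ (n+1) m : ℝ) : ℂ) * z ^ m
            = -(ρ:ℂ)^(2*(n:ℤ)+1) * (((rrF ρ n (m - 0) : ℝ) : ℂ) * z ^ m)
              + (1 + (ρ:ℂ)^(4*(n:ℤ)+2)) * (((rrF ρ n (m - 1) : ℝ) : ℂ) * z ^ m)
              - (ρ:ℂ)^(2*(n:ℤ)+1) * (((rrF ρ n (m - 2) : ℝ) : ℂ) * z ^ m) := by
          intro m _
          rw [hrec m]; ring
        rw [Finset.sum_congr rfl hcg, Finset.sum_sub_distrib, Finset.sum_add_distrib,
          ← Finset.mul_sum, ← Finset.mul_sum, ← Finset.mul_sum]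
      rw [expand, S0, S1, S2, hT, hT2]
      rw [zpow_zero, zpow_one, zpow_two]
      ring

lemma cont_zpow_circ (s : ℤ) : Continuous fun θ : ℝ => Complex.exp (θ * Complex.I) ^ s := by
  apply Continuous.zpow₀
  · exact Complex.continuous_exp.comp (by continuity)
  · intro θ; left; exact Complex.exp_ne_zero _

lemma integral_zpow_circle (s : ℤ) :
    ∫ θ in (0:ℝ)..(2*π), Complex.exp (θ * Complex.I) ^ s
      = if s = 0 then ((2*π : ℝ) : ℂ) else 0 := by
  rcases eq_or_ne s 0 with h | h
  · simp [h]
  · rw [if_neg h]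
    have hc : ((s:ℂ)) * Complex.I ≠ 0 :=
      mul_ne_zero (Int.cast_ne_zero.mpr h) Complex.I_ne_zero
    calc ∫ θ in (0:ℝ)..(2*π), Complex.exp (θ * Complex.I) ^ s
        = ∫ θ in (0:ℝ)..(2*π), Complex.exp ((s * Complex.I) * θ) := by
          apply intervalIntegral.integral_congr
          intro θ _
          dsimp
          rw [← Complex.exp_int_mul]
          congr 1
          push_cast
          ring
      _ = (Complex.exp ((s * Complex.I) * (2*π:ℝ)) - Complex.exp ((s * Complex.I) * (0:ℝ))) / (s * Complex.I) :=
          integral_exp_mul_complex hc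
      _ = 0 := by
          have e1 : ((s:ℂ) * Complex.I) * ((2*π:ℝ):ℂ) = s * (2*π*Complex.I) := by
            push_cast; ring
          rw [e1, Complex.exp_int_mul_two_pi_mul_I]
          norm_num

lemma integral_sum (ρ : ℝ) (n : ℕ) (p : ℤ) :
    ∫ θ in (0:ℝ)..(2*π), Complex.exp (θ * Complex.I) ^ p *
        (∑ m ∈ Finset.Icc (0:ℤ) (2*(n:ℤ)),
          ((rrF ρ n m : ℝ) : ℂ) * Complex.exp (θ * Complex.I) ^ (m - n))
      = ((2*π : ℝ) : ℂ) * ((rrF ρ n ((n:ℤ) - p) : ℝ) : ℂ) := by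
  have hne : ∀ θ : ℝ, Complex.exp (θ * Complex.I) ≠ 0 := fun θ => Complex.exp_ne_zero _
  have step1 : ∀ θ : ℝ, Complex.exp (θ * Complex.I) ^ p *
        (∑ m ∈ Finset.Icc (0:ℤ) (2*(n:ℤ)),
          ((rrF ρ n m : ℝ) : ℂ) * Complex.exp (θ * Complex.I) ^ (m - n))
      = ∑ m ∈ Finset.Icc (0:ℤ) (2*(n:ℤ)),
          ((rrF ρ n m : ℝ) : ℂ) * Complex.exp (θ * Complex.I) ^ (m - n + p) := by
    intro θ
    rw [Finset.mul_sum]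
    apply Finset.sum_congr rfl
    intro m _
    rw [zpow_add₀ (hne θ)]
    ring
  rw [intervalIntegral.integral_congr (g := fun θ => ∑ m ∈ Finset.Icc (0:ℤ) (2*(n:ℤ)),
      ((rrF ρ n m : ℝ) : ℂ) * Complex.exp (θ * Complex.I) ^ (m - n + p))
      (fun θ _ => step1 θ)]
  rw [intervalIntegral.integral_finset_sum (f := fun m (θ : ℝ) =>
      ((rrF ρ n m : ℝ) : ℂ) * Complex.exp (θ * Complex.I) ^ (m - n + p)) (fun m _ =>
    ((continuous_const.mul (cont_zpow_circ (m - n + p))).intervalIntegrable _ _))]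
  have step2 : ∀ m ∈ Finset.Icc (0:ℤ) (2*(n:ℤ)),
      (∫ θ in (0:ℝ)..(2*π), ((rrF ρ n m : ℝ) : ℂ) * Complex.exp (θ * Complex.I) ^ (m - n + p))
      = if m = (n:ℤ) - p then ((2*π : ℝ) : ℂ) * ((rrF ρ n m : ℝ) : ℂ) else 0 := by
    intro m _
    rw [intervalIntegral.integral_const_mul, integral_zpow_circle]
    rcases eq_or_ne m ((n:ℤ) - p) with h | h
    · rw [if_pos h, if_pos (by omega)]; ring
    · rw [if_neg h, if_neg (by omega)]; ring
  rw [Finset.sum_congr rfl step2, Finset.sum_ite_eq']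
  by_cases hmem : (n:ℤ) - p ∈ Finset.Icc (0:ℤ) (2*(n:ℤ))
  · rw [if_pos hmem]
  · rw [if_neg hmem]
    simp only [Finset.mem_Icc, not_and_or, not_le] at hmem
    rcases hmem with h | h
    · rw [rrF_neg ρ n _ h]; norm_num
    · rw [rrF_gt ρ n _ h]; norm_num


/-- Theorem 4.12: for the sequence of measures dμ_{n+1}(z) = |z − T_n|² dμ_n(z)
on the unit circle starting from Haar measure, with ω_n the normalized first
moment and T_n = (ω_n + ρ)/(ρω̄_n + 1), one has T_n = ρ^{2n+1} for all n;
in particular T_n → 0. -/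
theorem stmt16 (ρ : ℝ) (h1 : 0 < ρ) (h2 : ρ < 1)
    (w : ℕ → ℂ → ℝ) (ω T : ℕ → ℂ)
    (hw0 : ∀ z, w 0 z = 1)
    (hwsucc : ∀ n z, w (n + 1) z = ‖z - T n‖ ^ 2 * w n z)
    (hω : ∀ n, ω n =
      (∫ θ in (0:ℝ)..(2 * π),
          Complex.exp (θ * Complex.I) * (w n (Complex.exp (θ * Complex.I)) : ℂ)) /
      (∫ θ in (0:ℝ)..(2 * π), (w n (Complex.exp (θ * Complex.I)) : ℂ)))
    (hT : ∀ n, T n = (ω n + ρ) / (ρ * (starRingEnd ℂ) (ω n) + 1)) :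
    (∀ n, T n = (ρ : ℂ) ^ (2 * n + 1)) ∧ Tendsto T atTop (nhds 0) := by
  have hρ : ρ ≠ 0 := ne_of_gt h1
  have hQpos : (0:ℝ) < ρ^2 := by positivity
  have hQne : (ρ^2 : ℝ) ≠ 0 := ne_of_gt hQpos
  have hQlt : (ρ^2 : ℝ) < 1 := by nlinarith
  have key : ∀ n, T n = (ρ : ℂ) ^ (2 * n + 1) := by
    intro n
    induction n using Nat.strong_induction_on with
    | _ n IH =>
    -- step 1 : the explicit product formula for w n
    have hwn : ∀ z : ℂ, w n z
        = ∏ k ∈ Finset.range n, ‖z - (ρ:ℂ)^(2*k+1)‖ ^ 2 := by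
      have haux : ∀ m, m ≤ n → ∀ z, w m z
          = ∏ k ∈ Finset.range m, ‖z - (ρ:ℂ)^(2*k+1)‖ ^ 2 := by
        intro m
        induction m with
        | zero => intro _ z; simp [hw0]
        | succ m ihm =>
            intro hm z
            rw [hwsucc m z, ihm (by omega) z, IH m (by omega), Finset.prod_range_succ]
            ring
      exact haux n le_rfl
    -- step 2 : pointwise Laurent expansion on the circle
    have hwC : ∀ θ : ℝ, ((w n (Complex.exp (θ * Complex.I)) : ℝ) : ℂ)
        = ∑ m ∈ Finset.Icc (0:ℤ) (2*(n:ℤ)),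
            ((rrF ρ n m : ℝ) : ℂ) * Complex.exp (θ * Complex.I) ^ (m - n) := by
      intro θ
      set z := Complex.exp (θ * Complex.I) with hzdef
      have hz : z ≠ 0 := Complex.exp_ne_zero _
      have hconj : (starRingEnd ℂ) z = z⁻¹ := by
        calc (starRingEnd ℂ) z = Complex.exp ((starRingEnd ℂ) ((θ:ℂ) * Complex.I)) :=
              (Complex.exp_conj _).symm
          _ = Complex.exp (-((θ:ℂ) * Complex.I)) := by
              rw [map_mul, Complex.conj_I, Complex.conj_ofReal]; ring_nf
          _ = z⁻¹ := Complex.exp_neg _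
      have habs : ∀ k : ℕ, ((‖z - (ρ:ℂ)^(2*k+1)‖ ^ 2 : ℝ) : ℂ)
          = (z - (ρ:ℂ)^(2*k+1)) * (z⁻¹ - (ρ:ℂ)^(2*k+1)) := by
        intro k
        rw [Complex.sq_norm, ← Complex.mul_conj]
        congr 1
        rw [map_sub, hconj]
        congr 1
        rw [← Complex.ofReal_pow, Complex.conj_ofReal]
      calc ((w n z : ℝ) : ℂ)
          = ∏ k ∈ Finset.range n, ((‖z - (ρ:ℂ)^(2*k+1)‖ ^ 2 : ℝ) : ℂ) := by
            rw [hwn z]; push_cast; rfl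
        _ = ∏ k ∈ Finset.range n, ((z - (ρ:ℂ)^(2*k+1)) * (z⁻¹ - (ρ:ℂ)^(2*k+1))) :=
            Finset.prod_congr rfl (fun k _ => habs k)
        _ = z ^ (-(n:ℤ)) * ∏ k ∈ Finset.range n,
              ((z - (ρ:ℂ)^(2*k+1)) * (1 - (ρ:ℂ)^(2*k+1) * z)) := by
            have e1 : ∀ k ∈ Finset.range n, (z - (ρ:ℂ)^(2*k+1)) * (z⁻¹ - (ρ:ℂ)^(2*k+1))
                = z⁻¹ * ((z - (ρ:ℂ)^(2*k+1)) * (1 - (ρ:ℂ)^(2*k+1) * z)) := by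
              intro k _
              have e2 : z⁻¹ * (1 - (ρ:ℂ)^(2*k+1) * z) = z⁻¹ - (ρ:ℂ)^(2*k+1) := by
                rw [mul_sub, mul_one,
                  show z⁻¹ * ((ρ:ℂ)^(2*k+1) * z) = (ρ:ℂ)^(2*k+1) * (z⁻¹ * z) by ring,
                  inv_mul_cancel₀ hz, mul_one]
              rw [← e2]
              ring
            rw [Finset.prod_congr rfl e1, Finset.prod_mul_distrib, Finset.prod_const]
            congr 1
            rw [Finset.card_range, zpow_neg, zpow_natCast, inv_pow]
        _ = z ^ (-(n:ℤ)) * ∑ m ∈ Finset.Icc (0:ℤ) (2*(n:ℤ)), ((rrF ρ n m : ℝ) : ℂ) * z ^ m := by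
            rw [prod_expand ρ hρ n z hz]
        _ = ∑ m ∈ Finset.Icc (0:ℤ) (2*(n:ℤ)), ((rrF ρ n m : ℝ) : ℂ) * z ^ (m - n) := by
            rw [Finset.mul_sum]
            apply Finset.sum_congr rfl
            intro m _
            rw [show m - (n:ℤ) = -(n:ℤ) + m by ring, zpow_add₀ hz]
            ring
    -- step 3 : the two integrals
    have hInt1 : (∫ θ in (0:ℝ)..(2 * π),
          Complex.exp (θ * Complex.I) * (w n (Complex.exp (θ * Complex.I)) : ℂ))
        = ((2*π : ℝ) : ℂ) * ((rrF ρ n ((n:ℤ) - 1) : ℝ) : ℂ) := by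
      rw [intervalIntegral.integral_congr (g := fun θ : ℝ => Complex.exp (θ * Complex.I) ^ (1:ℤ) *
          (∑ m ∈ Finset.Icc (0:ℤ) (2*(n:ℤ)),
            ((rrF ρ n m : ℝ) : ℂ) * Complex.exp (θ * Complex.I) ^ (m - n)))
          (fun θ _ => by dsimp; rw [hwC θ, zpow_one])]
      exact integral_sum ρ n 1
    have hInt0 : (∫ θ in (0:ℝ)..(2 * π), (w n (Complex.exp (θ * Complex.I)) : ℂ))
        = ((2*π : ℝ) : ℂ) * ((rrF ρ n ((n:ℤ) - 0) : ℝ) : ℂ) := by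
      rw [intervalIntegral.integral_congr (g := fun θ : ℝ => Complex.exp (θ * Complex.I) ^ (0:ℤ) *
          (∑ m ∈ Finset.Icc (0:ℤ) (2*(n:ℤ)),
            ((rrF ρ n m : ℝ) : ℂ) * Complex.exp (θ * Complex.I) ^ (m - n)))
          (fun θ _ => by dsimp; rw [hwC θ, zpow_zero, one_mul])]
      exact integral_sum ρ n 0
    -- step 4 : values of the relevant coefficients
    set g0 := gbF (ρ^2) (2*n) ((n:ℤ)) with hg0def
    set g1 := gbF (ρ^2) (2*n) ((n:ℤ)-1) with hg1def
    have hrr0 : rrF ρ n ((n:ℤ) - 0) = g0 := by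
      show (-1:ℝ) ^ ((n:ℤ) + ((n:ℤ) - 0)) * ρ ^ (((n:ℤ) - ((n:ℤ)-0))^2) * gbF (ρ^2) (2*n) ((n:ℤ)-0) = _
      rw [show ((n:ℤ) + ((n:ℤ) - 0)) = 2 * (n:ℤ) by ring,
        show (((n:ℤ) - ((n:ℤ)-0))^2) = 0 by ring, zpow_mul,
        show ((n:ℤ) - 0) = (n:ℤ) by ring]
      norm_num
      rfl
    have hrr1 : rrF ρ n ((n:ℤ) - 1) = -ρ * g1 := by
      show (-1:ℝ) ^ ((n:ℤ) + ((n:ℤ) - 1)) * ρ ^ (((n:ℤ) - ((n:ℤ)-1))^2) * gbF (ρ^2) (2*n) ((n:ℤ)-1) = _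
      rw [show ((n:ℤ) + ((n:ℤ) - 1)) = 2 * (n:ℤ) + (-1) by ring,
        show (((n:ℤ) - ((n:ℤ)-1))^2) = 1 by ring,
        zpow_add₀ (by norm_num : (-1:ℝ) ≠ 0), zpow_mul]
      norm_num
      exact Or.inl rfl
    have hg0pos : 0 < g0 :=
      gbF_pos _ hQpos _ _ (by positivity) (by push_cast; omega)
    have hg0ne : g0 ≠ 0 := ne_of_gt hg0pos
    have hg1nonneg : 0 ≤ g1 := gbF_nonneg _ hQpos _ _
    -- the ratio identity
    have hkey : (1 - (ρ^2)^(n:ℕ)) * g0 = (1 - (ρ^2)^(n+1:ℕ)) * g1 := by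
      have h := gbF_ratio (ρ^2) hQne (2*n) ((n:ℤ)-1)
      rw [show ((n:ℤ)-1+1) = (n:ℤ) by ring] at h
      rw [show ((2*n:ℕ):ℤ) - ((n:ℤ)-1) = (n:ℤ)+1 by push_cast; ring] at h
      rw [show ((n:ℤ)+1) = ((n+1:ℕ):ℤ) by push_cast; ring] at h
      rw [show ((n:ℤ)) = ((n:ℕ):ℤ) by rfl] at h
      rw [zpow_natCast, zpow_natCast] at h
      exact h
    -- step 5 : the value of ω n
    have hωn : ω n = ((-ρ * g1 / g0 : ℝ) : ℂ) := by
      have h2πne : ((2*π : ℝ) : ℂ) ≠ 0 :=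
        Complex.ofReal_ne_zero.mpr (by positivity)
      rw [hω n, hInt1, hInt0, hrr1, hrr0]
      rw [mul_div_mul_left _ _ h2πne, ← Complex.ofReal_div]
    -- step 6 : conclude
    have hcon : (starRingEnd ℂ) (ω n) = ω n := by rw [hωn, Complex.conj_ofReal]
    have hd1 : (0:ℝ) < 1 - (ρ^2)^(n+1) := by
      have := pow_lt_one₀ (le_of_lt hQpos) hQlt (show n+1 ≠ 0 by omega)
      linarith
    have hden : (0:ℝ) < g0 - ρ^2 * g1 := by
      have e : (1 - (ρ^2)^(n+1)) * (g0 - ρ^2*g1) = (1 - ρ^2) * g0 := by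
        linear_combination (ρ^2) * hkey
      nlinarith
    have hdenR : ρ * (-ρ * g1 / g0) + 1 ≠ 0 := by
      have e : ρ * (-ρ * g1 / g0) + 1 = (g0 - ρ^2*g1)/g0 := by field_simp; ring
      rw [e]
      exact ne_of_gt (div_pos hden hg0pos)
    have hreal : (-ρ * g1 / g0 + ρ) / (ρ * (-ρ * g1 / g0) + 1) = ρ^(2*n+1) := by
      rw [div_eq_iff hdenR]
      field_simp
      linear_combination ρ * hkey
    rw [hT n, hcon, hωn]
    rw [show ((-ρ * g1 / g0 : ℝ) : ℂ) + (ρ:ℂ) = ((-ρ * g1 / g0 + ρ : ℝ) : ℂ) by push_cast; ring,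
        show (ρ:ℂ) * ((-ρ * g1 / g0 : ℝ) : ℂ) + 1 = ((ρ * (-ρ * g1 / g0) + 1 : ℝ) : ℂ) by
          push_cast; ring,
        ← Complex.ofReal_div, hreal]
    push_cast
    ring
  refine ⟨key, ?_⟩
  have hTeq : T = fun n => (ρ:ℂ) * ((ρ:ℂ)^2) ^ n := by
    funext n
    rw [key n, pow_succ', pow_mul]
  rw [hTeq]
  have hlim : Tendsto (fun n : ℕ => ((ρ:ℂ)^2) ^ n) atTop (nhds 0) := by
    apply tendsto_pow_atTop_nhds_zero_of_norm_lt_one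
    rw [show ((ρ:ℂ)^2) = ((ρ^2 : ℝ) : ℂ) by push_cast; ring, Complex.norm_real]
    rw [Real.norm_eq_abs, abs_of_pos hQpos]
    exact hQlt
  have hfin := hlim.const_mul ((ρ:ℂ))
  simpa using hfin
end

section
/- For 0 < ρ < 1, the limits of the k-th moments of the measures dμ_n(z) = ∏_{j=0}^{n−1}|z − ρ^{2j+1}|² dμ₀(z) on the unit circle satisfy lim_{n→∞} (∫ z^k dμ_n)/(∫ dμ_n) = (−1)^k ρ^{k²} for every integer k ≥ 0. -/
open scoped Real
open Finset Filter

noncomputable def Pq (q : ℝ) (i : ℕ) : ℝ := ∏ t ∈ Finset.range i, (1 - q ^ (t + 1))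

noncomputable def dd (ρ : ℝ) (n m : ℕ) : ℝ :=
  if m ≤ n then (-1) ^ m * ρ ^ (m ^ 2) * Pq (ρ^2) (2*n) / (Pq (ρ^2) (n+m) * Pq (ρ^2) (n-m)) else 0

lemma Pq_pos {q : ℝ} (hq0 : 0 < q) (hq1 : q < 1) (i : ℕ) : 0 < Pq q i :=
  Finset.prod_pos fun t _ => by
    have : q ^ (t+1) < 1 := pow_lt_one₀ hq0.le hq1 (Nat.succ_ne_zero t)
    linarith

lemma Pq_succ (q : ℝ) (i : ℕ) : Pq q (i+1) = Pq q i * (1 - q ^ (i+1)) := Finset.prod_range_succ _ _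

lemma Pq_add (q : ℝ) (i j : ℕ) : Pq q (i + j) = Pq q i * ∏ t ∈ Finset.range j, (1 - q ^ (i + t + 1)) := by
  induction j with
  | zero => simp
  | succ j ih => rw [← Nat.add_assoc, Pq_succ, ih, Finset.prod_range_succ, mul_assoc]

lemma one_sub_pow_ne {q : ℝ} (hq0 : 0 < q) (hq1 : q < 1) {i : ℕ} (hi : i ≠ 0) : (1:ℝ) - q^i ≠ 0 := by
  have : q ^ i < 1 := pow_lt_one₀ hq0.le hq1 hi
  linarith

lemma dd_rec_succ {ρ : ℝ} (h1 : 0 < ρ) (h2 : ρ < 1) (n m : ℕ) :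
    dd ρ (n+1) (m+1) = (1 + ρ^(4*n+2)) * dd ρ n (m+1) - ρ^(2*n+1) * (dd ρ n m + dd ρ n (m+2)) := by
  have hq0 : (0:ℝ) < ρ^2 := by positivity
  have hq1 : ρ^2 < 1 := by nlinarith
  have hne : ∀ i : ℕ, i ≠ 0 → (1:ℝ) - (ρ^2)^i ≠ 0 := fun i hi => one_sub_pow_ne hq0 hq1 hi
  have hP := fun i => (Pq_pos hq0 hq1 i).ne'
  rcases le_or_gt (m+2) n with hc | hc
  · -- generic : m+2 ≤ n
    obtain ⟨t, rfl⟩ : ∃ t, n = m+2+t := ⟨n-(m+2), by omega⟩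
    simp only [dd]
    split_ifs <;> try omega
    have p1 : Pq (ρ^2) (2*(m+2+t+1)) = Pq (ρ^2) (2*(m+2+t)) * (1-(ρ^2)^(2*(m+2+t)+1)) * (1-(ρ^2)^(2*(m+2+t)+2)) := by
      rw [show 2*(m+2+t+1) = (2*(m+2+t)+1)+1 by omega, Pq_succ, Pq_succ]
    have p2 : Pq (ρ^2) (m+2+t+1+(m+1)) = Pq (ρ^2) (m+2+t+m) * (1-(ρ^2)^(m+2+t+m+1)) * (1-(ρ^2)^(m+2+t+m+2)) := by
      rw [show m+2+t+1+(m+1) = (m+2+t+m+1)+1 by omega, Pq_succ, Pq_succ]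
    have p3 : Pq (ρ^2) (m+2+t+1-(m+1)) = Pq (ρ^2) t * (1-(ρ^2)^(t+1)) * (1-(ρ^2)^(t+2)) := by
      rw [show m+2+t+1-(m+1) = (t+1)+1 by omega, Pq_succ, Pq_succ]
    have p4 : Pq (ρ^2) (m+2+t+(m+1)) = Pq (ρ^2) (m+2+t+m) * (1-(ρ^2)^(m+2+t+m+1)) := by
      rw [show m+2+t+(m+1) = (m+2+t+m)+1 by omega, Pq_succ]
    have p5 : Pq (ρ^2) (m+2+t-(m+1)) = Pq (ρ^2) t * (1-(ρ^2)^(t+1)) := by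
      rw [show m+2+t-(m+1) = t+1 by omega, Pq_succ]
    have p6 : Pq (ρ^2) (m+2+t-m) = Pq (ρ^2) t * (1-(ρ^2)^(t+1)) * (1-(ρ^2)^(t+2)) := by
      rw [show m+2+t-m = (t+1)+1 by omega, Pq_succ, Pq_succ]
    have p7 : Pq (ρ^2) (m+2+t+(m+2)) = Pq (ρ^2) (m+2+t+m) * (1-(ρ^2)^(m+2+t+m+1)) * (1-(ρ^2)^(m+2+t+m+2)) := by
      rw [show m+2+t+(m+2) = (m+2+t+m+1)+1 by omega, Pq_succ, Pq_succ]
    have p8 : Pq (ρ^2) (m+2+t-(m+2)) = Pq (ρ^2) t := by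
      rw [show m+2+t-(m+2) = t by omega]
    rw [p1, p2, p3, p4, p5, p6, p7, p8]
    have n1 := hne (2*(m+2+t)+1) (by omega)
    have n2 := hne (2*(m+2+t)+2) (by omega)
    have n3 := hne (m+2+t+m+1) (by omega)
    have n4 := hne (m+2+t+m+2) (by omega)
    have n5 := hne (t+1) (by omega)
    have n6 := hne (t+2) (by omega)
    have hA := hP (m+2+t+m)
    have hB := hP t
    field_simp
    ring
  · rcases le_or_gt n m with hc2 | hc2
    · rcases eq_or_lt_of_le hc2 with rfl | hc3
      · -- m = n
        simp only [dd]
        split_ifs <;> try omega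
        have p1 : Pq (ρ^2) (2*(n+1)) = Pq (ρ^2) (2*n) * (1-(ρ^2)^(2*n+1)) * (1-(ρ^2)^(2*n+2)) := by
          rw [show 2*(n+1) = (2*n+1)+1 by omega, Pq_succ, Pq_succ]
        have p2 : Pq (ρ^2) (n+1+(n+1)) = Pq (ρ^2) (2*n) * (1-(ρ^2)^(2*n+1)) * (1-(ρ^2)^(2*n+2)) := by
          rw [show n+1+(n+1) = (2*n+1)+1 by omega, Pq_succ, Pq_succ]
        have p3 : Pq (ρ^2) (n+1-(n+1)) = 1 := by
          rw [show n+1-(n+1) = 0 by omega]; simp [Pq]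
        have p4 : Pq (ρ^2) (n+n) = Pq (ρ^2) (2*n) := by rw [show n+n = 2*n by omega]
        have p5 : Pq (ρ^2) (n-n) = 1 := by rw [show n-n = 0 by omega]; simp [Pq]
        rw [p1, p2, p3, p4, p5]
        have n1 := hne (2*n+1) (by omega)
        have n2 := hne (2*n+2) (by omega)
        have hC := hP (2*n)
        field_simp
        ring
      · -- m > n : all zero
        simp only [dd]
        split_ifs <;> try omega
        ring
    · -- n = m+1
      obtain rfl : n = m+1 := by omega
      simp only [dd]
      split_ifs <;> try omega
      have p1 : Pq (ρ^2) (2*(m+1+1)) = Pq (ρ^2) (2*m+1) * (1-(ρ^2)^(2*m+2)) * (1-(ρ^2)^(2*m+3)) * (1-(ρ^2)^(2*m+4)) := by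
        rw [show 2*(m+1+1) = (((2*m+1)+1)+1)+1 by omega, Pq_succ, Pq_succ, Pq_succ]
      have p2 : Pq (ρ^2) (m+1+1+(m+1)) = Pq (ρ^2) (2*m+1) * (1-(ρ^2)^(2*m+2)) * (1-(ρ^2)^(2*m+3)) := by
        rw [show m+1+1+(m+1) = ((2*m+1)+1)+1 by omega, Pq_succ, Pq_succ]
      have p3 : Pq (ρ^2) (m+1+1-(m+1)) = 1 - ρ^2 := by
        rw [show m+1+1-(m+1) = 1 by omega]; simp [Pq]
      have p4 : Pq (ρ^2) (m+1+(m+1)) = Pq (ρ^2) (2*m+1) * (1-(ρ^2)^(2*m+2)) := by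
        rw [show m+1+(m+1) = (2*m+1)+1 by omega, Pq_succ]
      have p5 : Pq (ρ^2) (m+1-(m+1)) = 1 := by
        rw [show m+1-(m+1) = 0 by omega]; simp [Pq]
      have p6 : Pq (ρ^2) (m+1+m) = Pq (ρ^2) (2*m+1) := by rw [show m+1+m = 2*m+1 by omega]
      have p7 : Pq (ρ^2) (m+1-m) = 1 - ρ^2 := by
        rw [show m+1-m = 1 by omega]; simp [Pq]
      have p8 : Pq (ρ^2) (2*(m+1)) = Pq (ρ^2) (2*m+1) * (1-(ρ^2)^(2*m+2)) := by
        rw [show 2*(m+1) = (2*m+1)+1 by omega, Pq_succ]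
      rw [p1, p2, p3, p4, p5, p6, p7, p8]
      have n1 : (1:ℝ) - ρ^2 ≠ 0 := by nlinarith
      have n2 := hne (2*m+2) (by omega)
      have n3 := hne (2*m+3) (by omega)
      have n4 := hne (2*m+4) (by omega)
      have hA := hP (2*m+1)
      field_simp
      ring

lemma dd_rec_zero {ρ : ℝ} (h1 : 0 < ρ) (h2 : ρ < 1) (n : ℕ) :
    dd ρ (n+1) 0 = (1 + ρ^(4*n+2)) * dd ρ n 0 - ρ^(2*n+1) * (dd ρ n 1 + dd ρ n 1) := by
  have hq0 : (0:ℝ) < ρ^2 := by positivity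
  have hq1 : ρ^2 < 1 := by nlinarith
  have hne : ∀ i : ℕ, i ≠ 0 → (1:ℝ) - (ρ^2)^i ≠ 0 := fun i hi => one_sub_pow_ne hq0 hq1 hi
  have hP := fun i => (Pq_pos hq0 hq1 i).ne'
  rcases Nat.eq_zero_or_pos n with rfl | hn
  · simp only [dd]
    split_ifs <;> try omega
    have n1 : (1:ℝ) - ρ^2 ≠ 0 := by nlinarith
    simp [Pq, Finset.prod_range_succ]
    field_simp
    ring
  · obtain ⟨t, rfl⟩ : ∃ t, n = t+1 := ⟨n-1, by omega⟩
    simp only [dd]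
    split_ifs <;> try omega
    have p1 : Pq (ρ^2) (2*(t+1+1)) = Pq (ρ^2) (2*(t+1)) * (1-(ρ^2)^(2*(t+1)+1)) * (1-(ρ^2)^(2*(t+1)+2)) := by
      rw [show 2*(t+1+1) = ((2*(t+1))+1)+1 by omega, Pq_succ, Pq_succ]
    have p2 : Pq (ρ^2) (t+1+1+0) = Pq (ρ^2) t * (1-(ρ^2)^(t+1)) * (1-(ρ^2)^(t+2)) := by
      rw [show t+1+1+0 = (t+1)+1 by omega, Pq_succ, Pq_succ]
    have p3 : Pq (ρ^2) (t+1+1-0) = Pq (ρ^2) t * (1-(ρ^2)^(t+1)) * (1-(ρ^2)^(t+2)) := by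
      rw [show t+1+1-0 = (t+1)+1 by omega, Pq_succ, Pq_succ]
    have p4 : Pq (ρ^2) (t+1+0) = Pq (ρ^2) t * (1-(ρ^2)^(t+1)) := by
      rw [show t+1+0 = t+1 by omega, Pq_succ]
    have p5 : Pq (ρ^2) (t+1-0) = Pq (ρ^2) t * (1-(ρ^2)^(t+1)) := by
      rw [show t+1-0 = t+1 by omega, Pq_succ]
    have p6 : Pq (ρ^2) (t+1+1) = Pq (ρ^2) t * (1-(ρ^2)^(t+1)) * (1-(ρ^2)^(t+2)) := by
      rw [show t+1+1 = (t+1)+1 by omega, Pq_succ, Pq_succ]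
    have p7 : Pq (ρ^2) (t+1-1) = Pq (ρ^2) t := by rw [show t+1-1 = t by omega]
    rw [p1, p2, p3, p4, p5, p7]
    have n1 := hne (t+1) (by omega)
    have n2 := hne (t+2) (by omega)
    have n3 := hne (2*(t+1)+1) (by omega)
    have n4 := hne (2*(t+1)+2) (by omega)
    have hA := hP t
    have hB := hP (2*(t+1))
    field_simp
    ring

noncomputable def cc (ρ : ℝ) (n : ℕ) (m : ℤ) : ℝ := dd ρ n m.natAbs

lemma cc_rec {ρ : ℝ} (h1 : 0 < ρ) (h2 : ρ < 1) (n : ℕ) (m : ℤ) :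
    cc ρ (n+1) m = (1 + ρ^(4*n+2)) * cc ρ n m - ρ^(2*n+1) * (cc ρ n (m-1) + cc ρ n (m+1)) := by
  obtain ⟨m⟩ | m := m
  · match m with
    | 0 =>
      have e1 : ((Int.ofNat 0) - 1).natAbs = 1 := rfl
      have e2 : ((Int.ofNat 0) + 1).natAbs = 1 := rfl
      simp only [cc, e1, e2, Int.natAbs_natCast]
      exact dd_rec_zero h1 h2 n
    | (m+1) =>
      have e1 : ((Int.ofNat (m+1)) - 1).natAbs = m := by
        simp only [Int.ofNat_eq_natCast]; omega
      have e2 : ((Int.ofNat (m+1)) + 1).natAbs = m+2 := by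
        simp only [Int.ofNat_eq_natCast]; omega
      simp only [cc, e1, e2, Int.natAbs_natCast]
      exact dd_rec_succ h1 h2 n m
  · have e0 : (Int.negSucc m).natAbs = m+1 := rfl
    have e1 : ((Int.negSucc m) - 1).natAbs = m+2 := by
      rw [Int.negSucc_eq]; omega
    have e2 : ((Int.negSucc m) + 1).natAbs = m := by
      rw [Int.negSucc_eq]; omega
    simp only [cc, e0, e1, e2]
    rw [dd_rec_succ h1 h2 n m, add_comm (dd ρ n m)]

open intervalIntegral
open scoped Real

-- continuity of integrand
lemma contAux (ρ : ℝ) (n : ℕ) (k : ℤ) :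
    Continuous (fun θ : ℝ => Complex.exp (θ * Complex.I) ^ k *
      ((∏ j ∈ Finset.range n,
        ‖Complex.exp (θ * Complex.I) - (ρ : ℂ) ^ (2 * j + 1)‖ ^ 2 : ℝ) : ℂ)) := by
  have hexp : Continuous (fun θ : ℝ => Complex.exp (θ * Complex.I)) :=
    (Complex.continuous_ofReal.mul continuous_const).cexp
  apply Continuous.mul
  · exact hexp.zpow₀ k (fun x => Or.inl (Complex.exp_ne_zero _))
  · apply Complex.continuous_ofReal.comp
    apply continuous_finset_prod
    intro j _
    exact (continuous_norm.comp (hexp.sub continuous_const)).pow 2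

lemma momentBase (k : ℤ) (hk : k ≠ 0) :
    (∫ θ in (0:ℝ)..(2*π), Complex.exp (θ * Complex.I) ^ k) = 0 := by
  have h1 : ∀ θ : ℝ, Complex.exp (θ * Complex.I) ^ k = Complex.exp ((k * Complex.I) * θ) := by
    intro θ
    rw [← Complex.exp_int_mul]
    ring_nf
  rw [intervalIntegral.integral_congr (fun θ _ => h1 θ)]
  rw [integral_exp_mul_complex (by simp [Complex.I_ne_zero, hk] : (k:ℂ) * Complex.I ≠ 0)]
  have : (k:ℂ) * Complex.I * ((2*π : ℝ) : ℂ) = k * (2 * (π:ℂ) * Complex.I) := by push_cast; ring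
  rw [this, Complex.exp_int_mul_two_pi_mul_I]
  simp

lemma absSqKey (θ a : ℝ) :
    ((‖Complex.exp (θ * Complex.I) - (a:ℂ)‖ ^ 2 : ℝ) : ℂ)
      = (1 + (a:ℂ)^2) - a * Complex.exp (θ * Complex.I) - a * (Complex.exp (θ * Complex.I))⁻¹ := by
  have hz : Complex.exp ((θ:ℂ) * Complex.I) ≠ 0 := Complex.exp_ne_zero _
  have hconj : (starRingEnd ℂ) (Complex.exp (θ * Complex.I)) = (Complex.exp (θ * Complex.I))⁻¹ := by
    rw [← Complex.exp_conj, ← Complex.exp_neg]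
    congr 1
    rw [map_mul, Complex.conj_ofReal, Complex.conj_I]
    ring
  have h1 : ((‖Complex.exp (θ * Complex.I) - (a:ℂ)‖ ^ 2 : ℝ) : ℂ)
      = (Complex.exp (θ * Complex.I) - (a:ℂ)) * (starRingEnd ℂ) (Complex.exp (θ * Complex.I) - (a:ℂ)) := by
    rw [Complex.sq_norm, Complex.mul_conj]
  rw [h1, map_sub, hconj, Complex.conj_ofReal]
  field_simp
  ring

lemma moment {ρ : ℝ} (h1 : 0 < ρ) (h2 : ρ < 1) (n : ℕ) : ∀ (k : ℤ),
    (∫ θ in (0:ℝ)..(2*π), Complex.exp (θ * Complex.I) ^ k *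
      ((∏ j ∈ Finset.range n, ‖Complex.exp (θ * Complex.I) - (ρ : ℂ) ^ (2 * j + 1)‖ ^ 2 : ℝ) : ℂ))
    = ((2 * π * cc ρ n k : ℝ) : ℂ) := by
  induction n with
  | zero =>
    intro k
    simp only [Finset.range_zero, Finset.prod_empty, Complex.ofReal_one, mul_one]
    rcases eq_or_ne k 0 with rfl | hk
    · have hc : cc ρ 0 0 = 1 := by simp [cc, dd, Pq]
      rw [hc]
      simp only [zpow_zero]
      rw [intervalIntegral.integral_const]
      push_cast
      simp
    · rw [momentBase k hk]
      have : cc ρ 0 k = 0 := by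
        rw [cc, dd, if_neg (by omega : ¬ k.natAbs ≤ 0)]
      rw [this]
      simp
  | succ n ih =>
    intro k
    have hz : ∀ θ : ℝ, Complex.exp ((θ:ℂ) * Complex.I) ≠ 0 := fun θ => Complex.exp_ne_zero _
    have hstep : ∀ θ : ℝ,
        Complex.exp (θ * Complex.I) ^ k *
          ((∏ j ∈ Finset.range (n+1), ‖Complex.exp (θ * Complex.I) - (ρ : ℂ) ^ (2 * j + 1)‖ ^ 2 : ℝ) : ℂ)
        = (1 + ((ρ^(2*n+1) : ℝ) : ℂ)^2) * (Complex.exp (θ * Complex.I) ^ k *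
            ((∏ j ∈ Finset.range n, ‖Complex.exp (θ * Complex.I) - (ρ : ℂ) ^ (2 * j + 1)‖ ^ 2 : ℝ) : ℂ))
          - ((ρ^(2*n+1) : ℝ) : ℂ) * (Complex.exp (θ * Complex.I) ^ (k+1) *
            ((∏ j ∈ Finset.range n, ‖Complex.exp (θ * Complex.I) - (ρ : ℂ) ^ (2 * j + 1)‖ ^ 2 : ℝ) : ℂ))
          - ((ρ^(2*n+1) : ℝ) : ℂ) * (Complex.exp (θ * Complex.I) ^ (k-1) *
            ((∏ j ∈ Finset.range n, ‖Complex.exp (θ * Complex.I) - (ρ : ℂ) ^ (2 * j + 1)‖ ^ 2 : ℝ) : ℂ)) := by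
      intro θ
      rw [Finset.prod_range_succ, Complex.ofReal_mul]
      have ha : (ρ : ℂ) ^ (2*n+1) = ((ρ^(2*n+1) : ℝ) : ℂ) := by push_cast; ring
      rw [ha, absSqKey θ (ρ^(2*n+1)), zpow_add_one₀ (hz θ), zpow_sub_one₀ (hz θ)]
      ring
    rw [intervalIntegral.integral_congr (fun θ _ => hstep θ)]
    have i1 : IntervalIntegrable (fun θ : ℝ => Complex.exp (θ * Complex.I) ^ (k:ℤ) *
      ((∏ j ∈ Finset.range n, ‖Complex.exp (θ * Complex.I) - (ρ : ℂ) ^ (2 * j + 1)‖ ^ 2 : ℝ) : ℂ)) MeasureTheory.volume (0:ℝ) (2*π) :=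
      (contAux ρ n k).intervalIntegrable _ _
    have i2 : IntervalIntegrable (fun θ : ℝ => Complex.exp (θ * Complex.I) ^ ((k+1):ℤ) *
      ((∏ j ∈ Finset.range n, ‖Complex.exp (θ * Complex.I) - (ρ : ℂ) ^ (2 * j + 1)‖ ^ 2 : ℝ) : ℂ)) MeasureTheory.volume (0:ℝ) (2*π) :=
      (contAux ρ n (k+1)).intervalIntegrable _ _
    have i3 : IntervalIntegrable (fun θ : ℝ => Complex.exp (θ * Complex.I) ^ ((k-1):ℤ) *
      ((∏ j ∈ Finset.range n, ‖Complex.exp (θ * Complex.I) - (ρ : ℂ) ^ (2 * j + 1)‖ ^ 2 : ℝ) : ℂ)) MeasureTheory.volume (0:ℝ) (2*π) :=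
      (contAux ρ n (k-1)).intervalIntegrable _ _
    rw [intervalIntegral.integral_sub ((i1.const_mul _).sub (i2.const_mul _)) (i3.const_mul _),
        intervalIntegral.integral_sub (i1.const_mul _) (i2.const_mul _),
        intervalIntegral.integral_const_mul, intervalIntegral.integral_const_mul,
        intervalIntegral.integral_const_mul, ih k, ih (k+1), ih (k-1), cc_rec h1 h2 n k]
    push_cast
    ring

open Filter in
lemma ratio_tendsto {ρ : ℝ} (h1 : 0 < ρ) (h2 : ρ < 1) (k : ℕ) :
    Tendsto (fun n : ℕ => (2*π*cc ρ n (k:ℤ)) / (2*π*cc ρ n 0)) atTop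
      (nhds ((-1)^k * ρ^(k^2))) := by
  have hq0 : (0:ℝ) < ρ^2 := by positivity
  have hq1 : ρ^2 < 1 := by nlinarith
  have hpow : Tendsto (fun n : ℕ => (ρ^2)^n) atTop (nhds 0) :=
    tendsto_pow_atTop_nhds_zero_of_lt_one hq0.le hq1
  have hfac : ∀ (c : ℕ), Tendsto (fun n : ℕ => 1 - (ρ^2)^(n+c)) atTop (nhds 1) := by
    intro c
    have he : Tendsto (fun n : ℕ => n + c) atTop atTop :=
      tendsto_atTop_mono (fun n => Nat.le_add_right n c) tendsto_id
    simpa using tendsto_const_nhds.sub (hpow.comp he)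
  have hfacsub : ∀ (c : ℕ), Tendsto (fun n : ℕ => 1 - (ρ^2)^(n-k+c)) atTop (nhds 1) := by
    intro c
    have he : Tendsto (fun n : ℕ => n - k + c) atTop atTop :=
      tendsto_atTop_mono (fun n => Nat.le_add_right (n-k) c) (tendsto_sub_atTop_nat k)
    simpa using tendsto_const_nhds.sub (hpow.comp he)
  have hprod1 : Tendsto (fun n : ℕ => ∏ t ∈ Finset.range k, (1 - (ρ^2)^((n-k)+t+1))) atTop (nhds 1) := by
    have key : ∀ t ∈ Finset.range k, Tendsto (fun n : ℕ => 1 - (ρ^2)^((n-k)+t+1)) atTop (nhds 1) := by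
      intro t _
      simpa [add_assoc] using hfacsub (t+1)
    have := tendsto_finset_prod (f := fun (t : ℕ) (n : ℕ) => 1 - (ρ^2)^((n-k)+t+1))
      (a := fun _ => (1:ℝ)) (Finset.range k) key
    simpa using this
  have hprod2 : Tendsto (fun n : ℕ => ∏ t ∈ Finset.range k, (1 - (ρ^2)^(n+t+1))) atTop (nhds 1) := by
    have key : ∀ t ∈ Finset.range k, Tendsto (fun n : ℕ => 1 - (ρ^2)^(n+t+1)) atTop (nhds 1) := by
      intro t _
      simpa [add_assoc] using hfac (t+1)
    have := tendsto_finset_prod (f := fun (t : ℕ) (n : ℕ) => 1 - (ρ^2)^(n+t+1))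
      (a := fun _ => (1:ℝ)) (Finset.range k) key
    simpa using this
  have hg : Tendsto (fun n : ℕ => (∏ t ∈ Finset.range k, (1 - (ρ^2)^((n-k)+t+1))) /
      (∏ t ∈ Finset.range k, (1 - (ρ^2)^(n+t+1)))) atTop (nhds 1) := by
    simpa [Pi.div_def] using hprod1.div hprod2 one_ne_zero
  have hev : (fun n : ℕ => (2*π*cc ρ n (k:ℤ)) / (2*π*cc ρ n 0)) =ᶠ[atTop]
      (fun n : ℕ => ((-1)^k * ρ^(k^2)) * ((∏ t ∈ Finset.range k, (1 - (ρ^2)^((n-k)+t+1))) /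
        (∏ t ∈ Finset.range k, (1 - (ρ^2)^(n+t+1))))) := by
    filter_upwards [eventually_ge_atTop k] with n hn
    have hP := fun i => (Pq_pos hq0 hq1 i).ne'
    have hF1 : (0:ℝ) < ∏ t ∈ Finset.range k, (1 - (ρ^2)^((n-k)+t+1)) :=
      Finset.prod_pos fun t _ => by
        have : (ρ^2) ^ ((n-k)+t+1) < 1 := pow_lt_one₀ hq0.le hq1 (by omega)
        linarith
    have hF2 : (0:ℝ) < ∏ t ∈ Finset.range k, (1 - (ρ^2)^(n+t+1)) :=
      Finset.prod_pos fun t _ => by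
        have : (ρ^2) ^ (n+t+1) < 1 := pow_lt_one₀ hq0.le hq1 (by omega)
        linarith
    have e1 : cc ρ n (k:ℤ) = (-1)^k * ρ^(k^2) * Pq (ρ^2) (2*n) / (Pq (ρ^2) (n+k) * Pq (ρ^2) (n-k)) := by
      rw [cc, Int.natAbs_natCast, dd, if_pos hn]
    have e0 : cc ρ n 0 = Pq (ρ^2) (2*n) / (Pq (ρ^2) n * Pq (ρ^2) n) := by
      rw [cc, dd]
      norm_num
    have eA : Pq (ρ^2) (n+k) = Pq (ρ^2) n * ∏ t ∈ Finset.range k, (1 - (ρ^2)^(n+t+1)) := Pq_add _ n k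
    have eB : Pq (ρ^2) n = Pq (ρ^2) (n-k) * ∏ t ∈ Finset.range k, (1 - (ρ^2)^((n-k)+t+1)) := by
      conv_lhs => rw [show n = (n-k)+k by omega]
      exact Pq_add _ (n-k) k
    have algebra : ∀ s C N B F1 F2 : ℝ, C ≠ 0 → B ≠ 0 → F1 ≠ 0 → F2 ≠ 0 →
        N = B * F1 →
        (2*π*(s*C/((N*F2)*B))) / (2*π*(C/(N*N))) = s * (F1/F2) := by
      intro s C N B F1 F2 hC hB hf1 hf2 hN
      subst hN
      have hpi : (0:ℝ) < π := Real.pi_pos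
      field_simp
    rw [e1, e0, eA]
    exact algebra _ _ _ _ _ _ (hP _) (hP _) hF1.ne' hF2.ne' eB
  refine Tendsto.congr' hev.symm ?_
  have := hg.const_mul ((-1)^k * ρ^(k^2))
  simpa using this

/-- Limits of the k-th moments of dμ_n(z) = ∏_{j=0}^{n−1}|z − ρ^{2j+1}|² dμ₀(z)
on the unit circle: lim_n (∫ z^k dμ_n)/(∫ dμ_n) = (−1)^k ρ^{k²}. -/
theorem stmt18 (ρ : ℝ) (h1 : 0 < ρ) (h2 : ρ < 1) (k : ℕ) :
    Tendsto (fun n : ℕ =>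
      (∫ θ in (0:ℝ)..(2 * π), Complex.exp (θ * Complex.I) ^ k *
          ((∏ j ∈ Finset.range n,
            ‖Complex.exp (θ * Complex.I) - (ρ : ℂ) ^ (2 * j + 1)‖ ^ 2 : ℝ) : ℂ)) /
      (∫ θ in (0:ℝ)..(2 * π),
          ((∏ j ∈ Finset.range n,
            ‖Complex.exp (θ * Complex.I) - (ρ : ℂ) ^ (2 * j + 1)‖ ^ 2 : ℝ) : ℂ)))
      atTop (nhds ((-1) ^ k * (ρ : ℂ) ^ (k ^ 2))) := by
  have hnum : ∀ n : ℕ, (∫ θ in (0:ℝ)..(2 * π), Complex.exp (θ * Complex.I) ^ k *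
          ((∏ j ∈ Finset.range n,
            ‖Complex.exp (θ * Complex.I) - (ρ : ℂ) ^ (2 * j + 1)‖ ^ 2 : ℝ) : ℂ))
      = ((2 * π * cc ρ n (k:ℤ) : ℝ) : ℂ) := by
    intro n
    rw [← moment h1 h2 n (k:ℤ)]
    apply intervalIntegral.integral_congr
    intro θ _
    simp only [zpow_natCast]
  have hden : ∀ n : ℕ, (∫ θ in (0:ℝ)..(2 * π),
          ((∏ j ∈ Finset.range n,
            ‖Complex.exp (θ * Complex.I) - (ρ : ℂ) ^ (2 * j + 1)‖ ^ 2 : ℝ) : ℂ))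
      = ((2 * π * cc ρ n 0 : ℝ) : ℂ) := by
    intro n
    rw [← moment h1 h2 n 0]
    apply intervalIntegral.integral_congr
    intro θ _
    simp only [zpow_zero, one_mul]
  simp only [hnum, hden, ← Complex.ofReal_div]
  have h := ratio_tendsto h1 h2 k
  have h' := (Complex.continuous_ofReal.tendsto _).comp h
  convert h' using 2
  all_goals push_cast [Function.comp_apply]
  all_goals ring
end
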